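/- arXiv:2506.03441 — 3 statements merged into one kernel-verified Lean document; each statement's English description precedes it below -/
import Mathlib

section
/- For any weighted graph G with nonnegative edge weights, λ_max(H^EPR(G))/2 ≤ λ_max(H^QMC(G)) ≤ λ_max(H^EPR(G)). -/
open Matrix Finset

noncomputable section

/-- Computational basis states of `n` qubits. -/
abbrev QState (n : ℕ) := Fin n → Fin 2

/-- Pauli `X` matrix. -/
def pauliX : Matrix (Fin 2) (Fin 2) ℂ := !![0, 1; 1, 0]

/-- Pauli `Y` matrix. -/
def pauliY : Matrix (Fin 2) (Fin 2) ℂ := !![0, -Complex.I; Complex.I, 0]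

/-- Pauli `Z` matrix. -/
def pauliZ : Matrix (Fin 2) (Fin 2) ℂ := !![1, 0; 0, -1]

/-- The operator acting as `P` on qubit `i`, `Q` on qubit `j`, and the identity on all
other qubits of an `n`-qubit system. -/
def twoSite (n : ℕ) (i j : Fin n) (P Q : Matrix (Fin 2) (Fin 2) ℂ) :
    Matrix (QState n) (QState n) ℂ :=
  Matrix.of fun x y =>
    P (x i) (y i) * Q (x j) (y j) *
      ∏ l ∈ Finset.univ \ {i, j}, (if x l = y l then (1 : ℂ) else 0)

/-- Quantum MaxCut term on the pair `(i,j)`: `(1/2)(I - XᵢXⱼ - YᵢYⱼ - ZᵢZⱼ)`. -/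
def hQMC (n : ℕ) (i j : Fin n) : Matrix (QState n) (QState n) ℂ :=
  (1 / 2 : ℂ) • ((1 : Matrix (QState n) (QState n) ℂ)
    - twoSite n i j pauliX pauliX - twoSite n i j pauliY pauliY
    - twoSite n i j pauliZ pauliZ)

/-- XY term on the pair `(i,j)`: `(1/2)(I - XᵢXⱼ - YᵢYⱼ)`. -/
def hXY (n : ℕ) (i j : Fin n) : Matrix (QState n) (QState n) ℂ :=
  (1 / 2 : ℂ) • ((1 : Matrix (QState n) (QState n) ℂ)
    - twoSite n i j pauliX pauliX - twoSite n i j pauliY pauliY)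

/-- EPR term on the pair `(i,j)`: `(1/2)(I + XᵢXⱼ - YᵢYⱼ + ZᵢZⱼ)`. -/
def hEPR (n : ℕ) (i j : Fin n) : Matrix (QState n) (QState n) ℂ :=
  (1 / 2 : ℂ) • ((1 : Matrix (QState n) (QState n) ℂ)
    + twoSite n i j pauliX pauliX - twoSite n i j pauliY pauliY
    + twoSite n i j pauliZ pauliZ)

/-- Quantum MaxCut Hamiltonian of a weighted graph given by a symmetric weight
function `w` (each edge is counted twice in the double sum, whence the factor `1/2`). -/
def HQMC (n : ℕ) (w : Fin n → Fin n → ℝ) : Matrix (QState n) (QState n) ℂ :=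
  (1 / 2 : ℂ) • ∑ i, ∑ j, (w i j : ℂ) • hQMC n i j

/-- XY Hamiltonian of a weighted graph. -/
def HXY (n : ℕ) (w : Fin n → Fin n → ℝ) : Matrix (QState n) (QState n) ℂ :=
  (1 / 2 : ℂ) • ∑ i, ∑ j, (w i j : ℂ) • hXY n i j

/-- EPR Hamiltonian of a weighted graph. -/
def HEPR (n : ℕ) (w : Fin n → Fin n → ℝ) : Matrix (QState n) (QState n) ℂ :=
  (1 / 2 : ℂ) • ∑ i, ∑ j, (w i j : ℂ) • hEPR n i j

/-- The largest (real) eigenvalue of a Hamiltonian: the supremum of the real numbers in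
its complex spectrum. -/
def maxEigH {n : ℕ} (H : Matrix (QState n) (QState n) ℂ) : ℝ :=
  sSup {r : ℝ | (r : ℂ) ∈ spectrum ℂ H}
namespace QMCProof

/-- Tensor product of single-qubit matrices. -/
def kron (n : ℕ) (g : Fin n → Matrix (Fin 2) (Fin 2) ℂ) : Matrix (QState n) (QState n) ℂ :=
  Matrix.of fun x y => ∏ l, g l (x l) (y l)

lemma kron_mul (n : ℕ) (g h : Fin n → Matrix (Fin 2) (Fin 2) ℂ) :
    kron n g * kron n h = kron n (fun l => g l * h l) := by
  ext x y
  simp only [kron, Matrix.mul_apply, Matrix.of_apply]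
  rw [Fintype.prod_sum (fun l a => g l (x l) a * h l a (y l))]
  exact Finset.sum_congr rfl fun z _ => (Finset.prod_mul_distrib).symm

lemma kron_one (n : ℕ) : kron n (fun _ => (1 : Matrix (Fin 2) (Fin 2) ℂ)) = 1 := by
  ext x y
  simp only [kron, Matrix.of_apply, Matrix.one_apply]
  by_cases h : x = y
  · subst h; simp
  · rw [if_neg h]
    obtain ⟨l, hl⟩ := Function.ne_iff.mp h
    exact Finset.prod_eq_zero (Finset.mem_univ l) (by simp [Matrix.one_apply, hl])

lemma kron_conjTranspose (n : ℕ) (g : Fin n → Matrix (Fin 2) (Fin 2) ℂ) :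
    (kron n g)ᴴ = kron n (fun l => (g l)ᴴ) := by
  ext x y
  simp [kron, Matrix.conjTranspose_apply, map_prod]

end QMCProof
namespace QMCProof

open Complex

lemma twoSite_eq_kron (n : ℕ) {i j : Fin n} (hij : i ≠ j) (P Q : Matrix (Fin 2) (Fin 2) ℂ) :
    twoSite n i j P Q = kron n (fun l => if l = i then P else if l = j then Q else 1) := by
  ext x y
  simp only [twoSite, kron, Matrix.of_apply]
  rw [← Finset.prod_sdiff (Finset.subset_univ ({i, j} : Finset (Fin n))), Finset.prod_pair hij]
  have h1 : ∀ l ∈ Finset.univ \ ({i, j} : Finset (Fin n)),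
      (if l = i then P else if l = j then Q else 1) (x l) (y l)
        = if x l = y l then (1 : ℂ) else 0 := by
    intro l hl
    simp only [Finset.mem_sdiff, Finset.mem_insert, Finset.mem_singleton] at hl
    push_neg at hl
    rw [if_neg hl.2.1, if_neg hl.2.2, Matrix.one_apply]
  rw [Finset.prod_congr rfl h1, if_pos rfl, if_neg hij.symm, if_pos rfl]
  ring

lemma twoSite_one_one (n : ℕ) {i j : Fin n} (hij : i ≠ j) :
    twoSite n i j 1 1 = 1 := by
  rw [twoSite_eq_kron n hij, ← kron_one n]
  apply congrArg (kron n); funext l; split_ifs <;> rfl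

lemma twoSite_smul_smul (n : ℕ) (i j : Fin n) (a b : ℂ) (P Q : Matrix (Fin 2) (Fin 2) ℂ) :
    twoSite n i j (a • P) (b • Q) = (a * b) • twoSite n i j P Q := by
  ext x y
  simp only [twoSite, Matrix.of_apply, Matrix.smul_apply, smul_eq_mul]
  ring

lemma twoSite_neg_neg (n : ℕ) (i j : Fin n) (P Q : Matrix (Fin 2) (Fin 2) ℂ) :
    twoSite n i j (-P) (-Q) = twoSite n i j P Q := by
  ext x y
  simp only [twoSite, Matrix.of_apply, Matrix.neg_apply]
  ring

lemma twoSite_mul (n : ℕ) {i j : Fin n} (hij : i ≠ j) (P Q P' Q' : Matrix (Fin 2) (Fin 2) ℂ) :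
    twoSite n i j P Q * twoSite n i j P' Q' = twoSite n i j (P * P') (Q * Q') := by
  rw [twoSite_eq_kron n hij, twoSite_eq_kron n hij, twoSite_eq_kron n hij, kron_mul]
  apply congrArg (kron n); funext l
  split_ifs <;> simp

lemma twoSite_conjTranspose (n : ℕ) (i j : Fin n) (P Q : Matrix (Fin 2) (Fin 2) ℂ) :
    (twoSite n i j P Q)ᴴ = twoSite n i j Pᴴ Qᴴ := by
  ext x y
  show (starRingEnd ℂ) (P (y i) (x i) * Q (y j) (x j) * ∏ l ∈ Finset.univ \ {i, j},
      (if y l = x l then (1 : ℂ) else 0)) = _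
  rw [_root_.map_mul, _root_.map_mul, map_prod]
  congr 1
  apply Finset.prod_congr rfl
  intro l _
  by_cases h : x l = y l
  · simp [h]
  · rw [if_neg (fun hh => h hh.symm), if_neg h]; simp

lemma kron_conj_twoSite (n : ℕ) {i j : Fin n} (hij : i ≠ j)
    (u : Fin n → Matrix (Fin 2) (Fin 2) ℂ) (P Q : Matrix (Fin 2) (Fin 2) ℂ) :
    (hu : ∀ l, u l * (u l)ᴴ = 1) →
    kron n u * twoSite n i j P Q * (kron n u)ᴴ
      = twoSite n i j (u i * P * (u i)ᴴ) (u j * Q * (u j)ᴴ) := by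
  intro hu
  rw [twoSite_eq_kron n hij, twoSite_eq_kron n hij, kron_conjTranspose, kron_mul, kron_mul]
  apply congrArg (kron n); funext l
  split_ifs with h1 h2
  · subst h1; rfl
  · subst h2; rfl
  · rw [mul_one, hu l]

lemma kron_conj_one (n : ℕ) (u : Fin n → Matrix (Fin 2) (Fin 2) ℂ)
    (hu : ∀ l, u l * (u l)ᴴ = 1) :
    kron n u * 1 * (kron n u)ᴴ = 1 := by
  rw [mul_one, kron_conjTranspose, kron_mul, ← kron_one n]
  apply congrArg (kron n); funext l; exact hu l

/-! ### 2×2 facts -/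

lemma pauliX_ct : pauliXᴴ = pauliX := by
  ext a b; fin_cases a <;> fin_cases b <;> simp [pauliX]

lemma pauliY_ct : pauliYᴴ = pauliY := by
  ext a b; fin_cases a <;> fin_cases b <;> simp [pauliY]

lemma pauliZ_ct : pauliZᴴ = pauliZ := by
  ext a b; fin_cases a <;> fin_cases b <;> simp [pauliZ]

lemma pauliX_mul_X : pauliX * pauliX = 1 := by
  ext a b; fin_cases a <;> fin_cases b <;>
    simp [pauliX, Matrix.mul_apply, Fin.sum_univ_two, Matrix.one_apply]

lemma pauliY_mul_Y : pauliY * pauliY = 1 := by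
  ext a b; fin_cases a <;> fin_cases b <;>
    simp [pauliY, Matrix.mul_apply, Fin.sum_univ_two, Matrix.one_apply]

lemma pauliZ_mul_Z : pauliZ * pauliZ = 1 := by
  ext a b; fin_cases a <;> fin_cases b <;>
    simp [pauliZ, Matrix.mul_apply, Fin.sum_univ_two, Matrix.one_apply]

lemma X_mul_Y : pauliX * pauliY = Complex.I • pauliZ := by
  ext a b; fin_cases a <;> fin_cases b <;>
    simp [pauliX, pauliY, pauliZ, Matrix.mul_apply, Fin.sum_univ_two]

lemma Y_mul_X : pauliY * pauliX = (-Complex.I) • pauliZ := by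
  ext a b; fin_cases a <;> fin_cases b <;>
    simp [pauliX, pauliY, pauliZ, Matrix.mul_apply, Fin.sum_univ_two]

lemma X_mul_Z : pauliX * pauliZ = (-Complex.I) • pauliY := by
  ext a b; fin_cases a <;> fin_cases b <;>
    simp [pauliX, pauliY, pauliZ, Matrix.mul_apply, Fin.sum_univ_two]

lemma Z_mul_X : pauliZ * pauliX = Complex.I • pauliY := by
  ext a b; fin_cases a <;> fin_cases b <;>
    simp [pauliX, pauliY, pauliZ, Matrix.mul_apply, Fin.sum_univ_two]

lemma Y_mul_Z : pauliY * pauliZ = Complex.I • pauliX := by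
  ext a b; fin_cases a <;> fin_cases b <;>
    simp [pauliX, pauliY, pauliZ, Matrix.mul_apply, Fin.sum_univ_two]

lemma Z_mul_Y : pauliZ * pauliY = (-Complex.I) • pauliX := by
  ext a b; fin_cases a <;> fin_cases b <;>
    simp [pauliX, pauliY, pauliZ, Matrix.mul_apply, Fin.sum_univ_two]

lemma Y_conj_X : pauliY * pauliX * pauliYᴴ = -pauliX := by
  rw [pauliY_ct, Y_mul_X]
  ext a b; fin_cases a <;> fin_cases b <;>
    simp [pauliX, pauliY, pauliZ, Matrix.mul_apply, Fin.sum_univ_two, Matrix.smul_apply,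
      Matrix.neg_apply] <;> ring_nf

lemma Y_conj_Y : pauliY * pauliY * pauliYᴴ = pauliY := by
  rw [pauliY_ct, pauliY_mul_Y, one_mul]

lemma Y_conj_Z : pauliY * pauliZ * pauliYᴴ = -pauliZ := by
  rw [pauliY_ct, Y_mul_Z]
  ext a b; fin_cases a <;> fin_cases b <;>
    simp [pauliX, pauliY, pauliZ, Matrix.mul_apply, Fin.sum_univ_two, Matrix.smul_apply,
      Matrix.neg_apply] <;> ring_nf

end QMCProof
namespace QMCProof

/-- The "triplet" term `(1/2)(I + XX + YY - ZZ)`. -/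
def hT (n : ℕ) (i j : Fin n) : Matrix (QState n) (QState n) ℂ :=
  (1 / 2 : ℂ) • ((1 : Matrix (QState n) (QState n) ℂ)
    + twoSite n i j pauliX pauliX + twoSite n i j pauliY pauliY
    - twoSite n i j pauliZ pauliZ)

/-- The corresponding Hamiltonian. -/
def HT (n : ℕ) (w : Fin n → Fin n → ℝ) : Matrix (QState n) (QState n) ℂ :=
  (1 / 2 : ℂ) • ∑ i, ∑ j, (w i j : ℂ) • hT n i j

lemma star_half : star (1/2 : ℂ) = 1/2 := by
  simp [Complex.star_def, map_ofNat]

lemma hQMC_herm (n : ℕ) (i j : Fin n) : (hQMC n i j).IsHermitian := by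
  show _ᴴ = _
  rw [hQMC, Matrix.conjTranspose_smul, Matrix.conjTranspose_sub, Matrix.conjTranspose_sub,
    Matrix.conjTranspose_sub, Matrix.conjTranspose_one, twoSite_conjTranspose,
    twoSite_conjTranspose, twoSite_conjTranspose, pauliX_ct, pauliY_ct, pauliZ_ct, star_half]

lemma hEPR_herm (n : ℕ) (i j : Fin n) : (hEPR n i j).IsHermitian := by
  show _ᴴ = _
  rw [hEPR, Matrix.conjTranspose_smul, Matrix.conjTranspose_add, Matrix.conjTranspose_sub,
    Matrix.conjTranspose_add, Matrix.conjTranspose_one, twoSite_conjTranspose,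
    twoSite_conjTranspose, twoSite_conjTranspose, pauliX_ct, pauliY_ct, pauliZ_ct, star_half]

lemma hT_herm (n : ℕ) (i j : Fin n) : (hT n i j).IsHermitian := by
  show _ᴴ = _
  rw [hT, Matrix.conjTranspose_smul, Matrix.conjTranspose_sub, Matrix.conjTranspose_add,
    Matrix.conjTranspose_add, Matrix.conjTranspose_one, twoSite_conjTranspose,
    twoSite_conjTranspose, twoSite_conjTranspose, pauliX_ct, pauliY_ct, pauliZ_ct, star_half]

lemma big_herm (n : ℕ) (w : Fin n → Fin n → ℝ) (h : Fin n → Fin n → Matrix (QState n) (QState n) ℂ)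
    (hh : ∀ i j, (h i j).IsHermitian) :
    ((1 / 2 : ℂ) • ∑ i, ∑ j, (w i j : ℂ) • h i j).IsHermitian := by
  show _ᴴ = _
  rw [Matrix.conjTranspose_smul, star_half]
  congr 1
  rw [Matrix.conjTranspose_sum]
  apply Finset.sum_congr rfl; intro i _
  rw [Matrix.conjTranspose_sum]
  apply Finset.sum_congr rfl; intro j _
  rw [Matrix.conjTranspose_smul, Complex.star_def, Complex.conj_ofReal, hh i j]

lemma HQMC_herm (n : ℕ) (w : Fin n → Fin n → ℝ) : (HQMC n w).IsHermitian :=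
  big_herm n w _ (hQMC_herm n)

lemma HEPR_herm (n : ℕ) (w : Fin n → Fin n → ℝ) : (HEPR n w).IsHermitian :=
  big_herm n w _ (hEPR_herm n)

lemma HT_herm (n : ℕ) (w : Fin n → Fin n → ℝ) : (HT n w).IsHermitian :=
  big_herm n w _ (hT_herm n)

/-- `hQMC` squares to twice itself (it is twice a projection). -/
lemma hQMC_mul_self (n : ℕ) {i j : Fin n} (hij : i ≠ j) :
    hQMC n i j * hQMC n i j = (2 : ℂ) • hQMC n i j := by
  set A := twoSite n i j pauliX pauliX with hAdef
  set B := twoSite n i j pauliY pauliY with hBdef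
  set C := twoSite n i j pauliZ pauliZ with hCdef
  have hA : A * A = 1 := by rw [hAdef, twoSite_mul n hij, pauliX_mul_X, twoSite_one_one n hij]
  have hB : B * B = 1 := by rw [hBdef, twoSite_mul n hij, pauliY_mul_Y, twoSite_one_one n hij]
  have hC : C * C = 1 := by rw [hCdef, twoSite_mul n hij, pauliZ_mul_Z, twoSite_one_one n hij]
  have hAB : A * B = -C := by
    rw [hAdef, hBdef, twoSite_mul n hij, X_mul_Y, twoSite_smul_smul, Complex.I_mul_I,
      neg_one_smul, hCdef]
  have hBA : B * A = -C := by
    rw [hAdef, hBdef, twoSite_mul n hij, Y_mul_X, twoSite_smul_smul]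
    simp [Complex.I_mul_I, hCdef]
  have hAC : A * C = -B := by
    rw [hAdef, hCdef, twoSite_mul n hij, X_mul_Z, twoSite_smul_smul]
    simp [Complex.I_mul_I, hBdef]
  have hCA : C * A = -B := by
    rw [hAdef, hCdef, twoSite_mul n hij, Z_mul_X, twoSite_smul_smul]
    simp [Complex.I_mul_I, hBdef]
  have hBC : B * C = -A := by
    rw [hBdef, hCdef, twoSite_mul n hij, Y_mul_Z, twoSite_smul_smul]
    simp [Complex.I_mul_I, hAdef]
  have hCB : C * B = -A := by
    rw [hBdef, hCdef, twoSite_mul n hij, Z_mul_Y, twoSite_smul_smul]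
    simp [Complex.I_mul_I, hAdef]
  have key : ((1 : Matrix (QState n) (QState n) ℂ) - A - B - C) * (1 - A - B - C)
      = (4 : ℂ) • (1 - A - B - C) := by
    simp only [sub_mul, one_mul, mul_sub, mul_one, hA, hB, hC, hAB, hBA, hAC, hCA, hBC, hCB]
    module
  rw [hQMC, Matrix.smul_mul, Matrix.mul_smul, smul_smul, key]
  module

end QMCProof
namespace QMCProof

open Complex

/-- Unnormalized single-qubit rotation `(1/√2)·(I - iX)` without the normalization. -/
def uM : Matrix (Fin 2) (Fin 2) ℂ := !![1, -Complex.I; -Complex.I, 1]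

lemma uM_ct : uMᴴ = !![1, Complex.I; Complex.I, 1] := by
  ext a b; fin_cases a <;> fin_cases b <;> simp [uM]

lemma uM_mul_ct : uM * uMᴴ = (2 : ℂ) • 1 := by
  rw [uM_ct]
  ext a b; fin_cases a <;> fin_cases b <;>
    simp [uM, Matrix.mul_apply, Fin.sum_univ_two, Matrix.one_apply, Matrix.smul_apply] <;>
    ring_nf <;> simp [Complex.I_sq] <;> ring

lemma uM_ct_mul : uMᴴ * uM = (2 : ℂ) • 1 := by
  rw [uM_ct]
  ext a b; fin_cases a <;> fin_cases b <;>
    simp [uM, Matrix.mul_apply, Fin.sum_univ_two, Matrix.one_apply, Matrix.smul_apply] <;>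
    ring_nf <;> simp [Complex.I_sq] <;> ring

lemma uM_conj_X : uM * pauliX * uMᴴ = (2 : ℂ) • pauliX := by
  rw [uM_ct]
  ext a b; fin_cases a <;> fin_cases b <;>
    simp [uM, pauliX, Matrix.mul_apply, Fin.sum_univ_two, Matrix.smul_apply] <;>
    ring_nf <;> simp [Complex.I_sq] <;> ring

lemma uM_conj_Y : uM * pauliY * uMᴴ = (2 : ℂ) • pauliZ := by
  rw [uM_ct]
  ext a b; fin_cases a <;> fin_cases b <;>
    simp [uM, pauliY, pauliZ, Matrix.mul_apply, Fin.sum_univ_two, Matrix.smul_apply] <;>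
    ring_nf <;> simp [Complex.I_sq] <;> ring

lemma uM_conj_Z : uM * pauliZ * uMᴴ = (-2 : ℂ) • pauliY := by
  rw [uM_ct]
  ext a b; fin_cases a <;> fin_cases b <;>
    simp [uM, pauliY, pauliZ, Matrix.mul_apply, Fin.sum_univ_two, Matrix.smul_apply] <;>
    ring_nf <;> simp [Complex.I_sq] <;> ring

/-- The normalized single-qubit unitary. -/
def uSite : Matrix (Fin 2) (Fin 2) ℂ := ((((Real.sqrt 2)⁻¹ : ℝ) : ℂ)) • uM

lemma uc_mul_uc : ((((Real.sqrt 2)⁻¹ : ℝ) : ℂ)) * ((((Real.sqrt 2)⁻¹ : ℝ) : ℂ)) = 1 / 2 := by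
  rw [← Complex.ofReal_mul]
  have h2 : ((Real.sqrt 2)⁻¹ : ℝ) * (Real.sqrt 2)⁻¹ = 1/2 := by
    rw [← mul_inv, Real.mul_self_sqrt] <;> norm_num
  rw [h2]
  norm_num

lemma uSite_ct : uSiteᴴ = ((((Real.sqrt 2)⁻¹ : ℝ) : ℂ)) • uMᴴ := by
  rw [uSite, Matrix.conjTranspose_smul, Complex.star_def, Complex.conj_ofReal]

lemma uSite_conj (A B : Matrix (Fin 2) (Fin 2) ℂ) (h : uM * A * uMᴴ = (2:ℂ) • B) :
    uSite * A * uSiteᴴ = B := by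
  rw [uSite_ct, uSite, Matrix.smul_mul, Matrix.smul_mul, Matrix.mul_smul, smul_smul, h,
    smul_smul, uc_mul_uc]
  norm_num

lemma uSite_unitary : uSite * uSiteᴴ = 1 := by
  have := uSite_conj 1 1 (by rw [mul_one, uM_mul_ct])
  rwa [mul_one] at this

lemma uSite_ct_unitary : uSiteᴴ * uSite = 1 := by
  rw [uSite_ct, uSite, Matrix.smul_mul, Matrix.mul_smul, smul_smul, uc_mul_uc, uM_ct_mul,
    smul_smul]
  norm_num

end QMCProof
namespace QMCProof

lemma twoSite_neg_left (n : ℕ) (i j : Fin n) (P Q : Matrix (Fin 2) (Fin 2) ℂ) :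
    twoSite n i j (-P) Q = -twoSite n i j P Q := by
  ext x y; simp only [twoSite, Matrix.of_apply, Matrix.neg_apply]; ring

lemma twoSite_neg_right (n : ℕ) (i j : Fin n) (P Q : Matrix (Fin 2) (Fin 2) ℂ) :
    twoSite n i j P (-Q) = -twoSite n i j P Q := by
  ext x y; simp only [twoSite, Matrix.of_apply, Matrix.neg_apply]; ring

/-- Tensor power of the rotation `uSite`. -/
def UU (n : ℕ) : Matrix (QState n) (QState n) ℂ := kron n (fun _ => uSite)

/-- Tensor product of `Y`s on the support of `s`. -/
def VV (n : ℕ) (s : QState n) : Matrix (QState n) (QState n) ℂ :=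
  kron n (fun l => if s l = 0 then 1 else pauliY)

lemma vSite_unit (s : QState n) (l : Fin n) :
    (if s l = 0 then (1 : Matrix (Fin 2) (Fin 2) ℂ) else pauliY)
      * (if s l = 0 then (1 : Matrix (Fin 2) (Fin 2) ℂ) else pauliY)ᴴ = 1 := by
  split_ifs
  · simp
  · rw [pauliY_ct, pauliY_mul_Y]

lemma VV_mul_ct (n : ℕ) (s : QState n) : VV n s * (VV n s)ᴴ = 1 := by
  rw [VV, kron_conjTranspose, kron_mul, ← kron_one n]
  apply congrArg (kron n); funext l; exact vSite_unit s l

lemma UU_mul_ct (n : ℕ) : UU n * (UU n)ᴴ = 1 := by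
  rw [UU, kron_conjTranspose, kron_mul, ← kron_one n]
  apply congrArg (kron n); funext _; exact uSite_unitary

lemma UU_ct_mul (n : ℕ) : (UU n)ᴴ * UU n = 1 := by
  rw [UU, kron_conjTranspose, kron_mul, ← kron_one n]
  apply congrArg (kron n); funext _; exact uSite_ct_unitary

lemma conj_add (U : Matrix (QState n) (QState n) ℂ) (A B : Matrix (QState n) (QState n) ℂ) :
    U * (A + B) * Uᴴ = U * A * Uᴴ + U * B * Uᴴ := by
  rw [mul_add, add_mul]

lemma conj_sub (U : Matrix (QState n) (QState n) ℂ) (A B : Matrix (QState n) (QState n) ℂ) :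
    U * (A - B) * Uᴴ = U * A * Uᴴ - U * B * Uᴴ := by
  rw [mul_sub, sub_mul]

lemma conj_smul (U : Matrix (QState n) (QState n) ℂ) (a : ℂ) (A : Matrix (QState n) (QState n) ℂ) :
    U * (a • A) * Uᴴ = a • (U * A * Uᴴ) := by
  rw [Matrix.mul_smul, Matrix.smul_mul]

/-- Conjugation by `UU` maps `hEPR` to `hT`. -/
lemma UU_conj_hEPR (n : ℕ) {i j : Fin n} (hij : i ≠ j) :
    UU n * hEPR n i j * (UU n)ᴴ = hT n i j := by
  have hu : ∀ l : Fin n, (fun _ : Fin n => uSite) l * ((fun _ : Fin n => uSite) l)ᴴ = 1 :=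
    fun _ => uSite_unitary
  rw [hEPR, conj_smul, conj_add, conj_sub, conj_add, UU]
  rw [kron_conj_one n _ hu]
  rw [kron_conj_twoSite n hij _ _ _ hu, kron_conj_twoSite n hij _ _ _ hu,
    kron_conj_twoSite n hij _ _ _ hu]
  rw [uSite_conj pauliX pauliX uM_conj_X, uSite_conj pauliY pauliZ uM_conj_Y,
    uSite_conj pauliZ (-pauliY) (by rw [uM_conj_Z]; module)]
  rw [twoSite_neg_neg, hT]
  congr 1
  abel

/-- Conjugation by `VV` on an `XX`- or `ZZ`-type term. -/
lemma VV_conj_twoSite_flip (n : ℕ) {i j : Fin n} (hij : i ≠ j) (s : QState n)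
    (P : Matrix (Fin 2) (Fin 2) ℂ) (hP : pauliY * P * pauliYᴴ = -P) :
    VV n s * twoSite n i j P P * (VV n s)ᴴ
      = if s i = s j then twoSite n i j P P else -twoSite n i j P P := by
  rw [VV, kron_conj_twoSite n hij _ _ _ (vSite_unit s)]
  have hsite : ∀ l : Fin n,
      (if s l = 0 then (1 : Matrix (Fin 2) (Fin 2) ℂ) else pauliY) * P
        * (if s l = 0 then (1 : Matrix (Fin 2) (Fin 2) ℂ) else pauliY)ᴴ
      = if s l = 0 then P else -P := by
    intro l; split_ifs
    · simp
    · exact hP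
  rw [hsite i, hsite j]
  have h2 : ∀ a : Fin 2, a = 0 ∨ a = 1 := by decide
  rcases h2 (s i) with hi | hi <;> rcases h2 (s j) with hj | hj <;>
    simp [hi, hj, twoSite_neg_left, twoSite_neg_right, twoSite_neg_neg]

/-- Conjugation by `VV` on the `YY` term. -/
lemma VV_conj_twoSite_Y (n : ℕ) {i j : Fin n} (hij : i ≠ j) (s : QState n) :
    VV n s * twoSite n i j pauliY pauliY * (VV n s)ᴴ = twoSite n i j pauliY pauliY := by
  rw [VV, kron_conj_twoSite n hij _ _ _ (vSite_unit s)]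
  have hsite : ∀ l : Fin n,
      (if s l = 0 then (1 : Matrix (Fin 2) (Fin 2) ℂ) else pauliY) * pauliY
        * (if s l = 0 then (1 : Matrix (Fin 2) (Fin 2) ℂ) else pauliY)ᴴ = pauliY := by
    intro l; split_ifs
    · simp
    · exact Y_conj_Y
  rw [hsite i, hsite j]

lemma VV_conj_hQMC (n : ℕ) {i j : Fin n} (hij : i ≠ j) (s : QState n) :
    VV n s * hQMC n i j * (VV n s)ᴴ
      = if s i = s j then hQMC n i j else hEPR n i j := by
  rw [hQMC, conj_smul, conj_sub, conj_sub, conj_sub]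
  rw [show VV n s * 1 * (VV n s)ᴴ = 1 by rw [mul_one, VV_mul_ct]]
  rw [VV_conj_twoSite_flip n hij s pauliX Y_conj_X,
    VV_conj_twoSite_flip n hij s pauliZ Y_conj_Z, VV_conj_twoSite_Y n hij s]
  by_cases hs : s i = s j
  · simp only [if_pos hs, hQMC]
  · simp only [if_neg hs, hEPR]
    module

end QMCProof
namespace QMCProof

open Complex

variable {n : ℕ}

lemma spectrumSet_eq {H : Matrix (QState n) (QState n) ℂ} (hA : H.IsHermitian) :
    {r : ℝ | (r : ℂ) ∈ spectrum ℂ H} = Set.range hA.eigenvalues := by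
  rw [← hA.spectrum_real_eq_range_eigenvalues]
  ext r
  simp only [Set.mem_setOf_eq]
  have hcast : algebraMap ℝ ℂ r = (r : ℂ) := by
    rw [Complex.coe_algebraMap]
  rw [← hcast]
  exact spectrum.algebraMap_mem_iff ℂ

lemma maxEig_mem {H : Matrix (QState n) (QState n) ℂ} (hA : H.IsHermitian) :
    ∃ k, hA.eigenvalues k = maxEigH H := by
  have h1 : maxEigH H = sSup (Set.range hA.eigenvalues) := by
    rw [maxEigH, spectrumSet_eq hA]
  have h2 : sSup (Set.range hA.eigenvalues) ∈ Set.range hA.eigenvalues :=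
    Set.Nonempty.csSup_mem (Set.range_nonempty _) (Set.finite_range _)
  obtain ⟨k, hk⟩ := h2
  exact ⟨k, by rw [hk, h1]⟩

lemma eig_le_maxEig {H : Matrix (QState n) (QState n) ℂ} (hA : H.IsHermitian) (k : QState n) :
    hA.eigenvalues k ≤ maxEigH H := by
  have h1 : maxEigH H = sSup (Set.range hA.eigenvalues) := by
    rw [maxEigH, spectrumSet_eq hA]
  rw [h1]
  exact le_csSup ((Set.finite_range _).bddAbove) (Set.mem_range_self k)

lemma re_star_mul_smul (r : ℝ) (z : ℂ) : (star z * ((r : ℂ) * z)).re = r * Complex.normSq z := by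
  rw [Complex.star_def,
    show (starRingEnd ℂ) z * ((r : ℂ) * z) = (r : ℂ) * ((starRingEnd ℂ) z * z) by ring,
    ← Complex.normSq_eq_conj_mul_self, ← Complex.ofReal_mul, Complex.ofReal_re]

lemma re_star_mul_self (z : ℂ) : (star z * z).re = Complex.normSq z := by
  have := re_star_mul_smul 1 z
  rwa [Complex.ofReal_one, one_mul, one_mul] at this

lemma dot_self_re (v : QState n → ℂ) : (star v ⬝ᵥ v).re = ∑ k, Complex.normSq (v k) := by
  rw [dotProduct, Complex.re_sum]
  apply Finset.sum_congr rfl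
  intro k _
  simp only [Pi.star_apply]
  rw [re_star_mul_self]

lemma dot_self_re_nonneg (v : QState n → ℂ) : 0 ≤ (star v ⬝ᵥ v).re := by
  rw [dot_self_re]
  exact Finset.sum_nonneg fun k _ => Complex.normSq_nonneg _

/-- Rayleigh quotient bound for a Hermitian matrix. -/
lemma rayleigh_le {H : Matrix (QState n) (QState n) ℂ} (hA : H.IsHermitian) (v : QState n → ℂ) :
    (star v ⬝ᵥ H *ᵥ v).re ≤ maxEigH H * (star v ⬝ᵥ v).re := by
  set U : Matrix (QState n) (QState n) ℂ := ↑(hA.eigenvectorUnitary) with hU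
  have hUU : U * star U = 1 := Matrix.mem_unitaryGroup_iff.mp hA.eigenvectorUnitary.2
  set w : QState n → ℂ := star U *ᵥ v with hw
  have hsw : star v ᵥ* U = star w := by
    rw [hw, Matrix.star_mulVec, Matrix.star_eq_conjTranspose, Matrix.conjTranspose_conjTranspose]
  have hnorm : star w ⬝ᵥ w = star v ⬝ᵥ v := by
    rw [← hsw, ← Matrix.dotProduct_mulVec, hw, Matrix.mulVec_mulVec, hUU, Matrix.one_mulVec]
  have hspec : star v ⬝ᵥ H *ᵥ v
      = star w ⬝ᵥ (Matrix.diagonal (RCLike.ofReal ∘ hA.eigenvalues) *ᵥ w) := by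
    conv_lhs => rw [hA.spectral_theorem, Unitary.conjStarAlgAut_apply]
    rw [← hU, ← Matrix.mulVec_mulVec, ← Matrix.mulVec_mulVec, Matrix.dotProduct_mulVec, hsw, hw]
  rw [hspec, dotProduct, Complex.re_sum]
  have hterm : ∀ k, ((star w k) * ((Matrix.diagonal (RCLike.ofReal ∘ hA.eigenvalues) *ᵥ w) k)).re
      = hA.eigenvalues k * Complex.normSq (w k) := by
    intro k
    rw [Matrix.mulVec_diagonal]
    exact re_star_mul_smul _ _
  calc ∑ k, ((star w) k * ((Matrix.diagonal (RCLike.ofReal ∘ hA.eigenvalues) *ᵥ w) k)).re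
      = ∑ k, hA.eigenvalues k * Complex.normSq (w k) := by
        exact Finset.sum_congr rfl fun k _ => hterm k
    _ ≤ ∑ k, maxEigH H * Complex.normSq (w k) := by
        apply Finset.sum_le_sum
        intro k _
        exact mul_le_mul_of_nonneg_right (eig_le_maxEig hA k) (Complex.normSq_nonneg _)
    _ = maxEigH H * (star w ⬝ᵥ w).re := by rw [← Finset.mul_sum, dot_self_re]
    _ = maxEigH H * (star v ⬝ᵥ v).re := by rw [hnorm]

/-- The maximal eigenvalue is attained on a unit vector. -/
lemma rayleigh_attained {H : Matrix (QState n) (QState n) ℂ} (hA : H.IsHermitian) :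
    ∃ v : QState n → ℂ, (star v ⬝ᵥ v).re = 1 ∧ (star v ⬝ᵥ H *ᵥ v).re = maxEigH H := by
  obtain ⟨k, hk⟩ := maxEig_mem hA
  refine ⟨⇑(hA.eigenvectorBasis k), ?_, ?_⟩
  · have horth := orthonormal_iff_ite.mp hA.eigenvectorBasis.orthonormal k k
    rw [if_pos rfl] at horth
    have : (inner ℂ (hA.eigenvectorBasis k) (hA.eigenvectorBasis k) : ℂ) = 1 := horth
    rw [EuclideanSpace.inner_eq_star_dotProduct] at this
    rw [show star ⇑(hA.eigenvectorBasis k) ⬝ᵥ ⇑(hA.eigenvectorBasis k) = (1:ℂ) by rw [dotProduct_comm]; exact this]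
    simp
  · have := hA.eigenvalues_eq k
    rw [← hk]
    exact this.symm

end QMCProof
namespace QMCProof

open Complex

variable {n : ℕ}

lemma maxEig_conj (U A : Matrix (QState n) (QState n) ℂ) (h1 : U * Uᴴ = 1) (h2 : Uᴴ * U = 1) :
    maxEigH (U * A * Uᴴ) = maxEigH A := by
  have hu : spectrum ℂ (U * A * Uᴴ) = spectrum ℂ A := by
    let u : (Matrix (QState n) (QState n) ℂ)ˣ := ⟨U, Uᴴ, h1, h2⟩
    have heq : U * A * Uᴴ
        = (u : Matrix (QState n) (QState n) ℂ) * A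
          * ((u⁻¹ : (Matrix (QState n) (QState n) ℂ)ˣ) : Matrix (QState n) (QState n) ℂ) := rfl
    rw [heq, spectrum.units_conjugate]
  rw [maxEigH, maxEigH, hu]

lemma dot_conj (V M : Matrix (QState n) (QState n) ℂ) (φ : QState n → ℂ) :
    star (Vᴴ *ᵥ φ) ⬝ᵥ (M *ᵥ (Vᴴ *ᵥ φ)) = star φ ⬝ᵥ ((V * M * Vᴴ) *ᵥ φ) := by
  rw [Matrix.star_mulVec, Matrix.conjTranspose_conjTranspose, Matrix.mulVec_mulVec,
    ← Matrix.dotProduct_mulVec, Matrix.mulVec_mulVec, ← mul_assoc]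

lemma dot_conj_self (V : Matrix (QState n) (QState n) ℂ) (h1 : V * Vᴴ = 1) (φ : QState n → ℂ) :
    star (Vᴴ *ᵥ φ) ⬝ᵥ (Vᴴ *ᵥ φ) = star φ ⬝ᵥ φ := by
  have := dot_conj V 1 φ
  rwa [Matrix.one_mulVec, mul_one, h1, Matrix.one_mulVec] at this

private def mulVecHom (φ : QState n → ℂ) : Matrix (QState n) (QState n) ℂ →+ (QState n → ℂ) where
  toFun M := M *ᵥ φ
  map_zero' := Matrix.zero_mulVec φ
  map_add' A B := Matrix.add_mulVec A B φ

private def dotHom (x : QState n → ℂ) : (QState n → ℂ) →+ ℂ where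
  toFun v := x ⬝ᵥ v
  map_zero' := dotProduct_zero x
  map_add' u v := dotProduct_add x u v

lemma dot_bigsum (w : Fin n → Fin n → ℝ) (h : Fin n → Fin n → Matrix (QState n) (QState n) ℂ)
    (φ : QState n → ℂ) :
    (star φ ⬝ᵥ ((1 / 2 : ℂ) • ∑ i, ∑ j, (w i j : ℂ) • h i j) *ᵥ φ).re
      = (1 / 2) * ∑ i, ∑ j, w i j * (star φ ⬝ᵥ h i j *ᵥ φ).re := by
  rw [Matrix.smul_mulVec, dotProduct_smul, smul_eq_mul,
    show ((1 / 2 : ℂ)) = ((1 / 2 : ℝ) : ℂ) by norm_num, Complex.re_ofReal_mul]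
  congr 1
  have expand : star φ ⬝ᵥ (∑ i, ∑ j, (w i j : ℂ) • h i j) *ᵥ φ
      = ∑ i, ∑ j, (w i j : ℂ) • (star φ ⬝ᵥ h i j *ᵥ φ) := by
    have e1 : (∑ i, ∑ j, (w i j : ℂ) • h i j) *ᵥ φ = ∑ i, ∑ j, ((w i j : ℂ) • h i j) *ᵥ φ := by
      have t1 := map_sum (mulVecHom φ) (fun i => ∑ j, (w i j : ℂ) • h i j) Finset.univ
      simp only [mulVecHom, AddMonoidHom.coe_mk, ZeroHom.coe_mk] at t1
      rw [t1]
      refine Finset.sum_congr rfl fun i _ => ?_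
      have t2 := map_sum (mulVecHom φ) (fun j => (w i j : ℂ) • h i j) Finset.univ
      simpa only [mulVecHom, AddMonoidHom.coe_mk, ZeroHom.coe_mk] using t2
    rw [e1]
    have e2 := map_sum (dotHom (star φ)) (fun i => ∑ j, ((w i j : ℂ) • h i j) *ᵥ φ) Finset.univ
    simp only [dotHom, AddMonoidHom.coe_mk, ZeroHom.coe_mk] at e2
    rw [e2]
    apply Finset.sum_congr rfl; intro i _
    have e3 := map_sum (dotHom (star φ)) (fun j => ((w i j : ℂ) • h i j) *ᵥ φ) Finset.univ
    simp only [dotHom, AddMonoidHom.coe_mk, ZeroHom.coe_mk] at e3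
    rw [e3]
    apply Finset.sum_congr rfl; intro j _
    rw [Matrix.smul_mulVec, dotProduct_smul]
  rw [expand, Complex.re_sum]
  apply Finset.sum_congr rfl; intro i _
  rw [Complex.re_sum]
  apply Finset.sum_congr rfl; intro j _
  rw [smul_eq_mul, Complex.re_ofReal_mul]

lemma hQMC_psd {i j : Fin n} (hij : i ≠ j) (φ : QState n → ℂ) :
    0 ≤ (star φ ⬝ᵥ hQMC n i j *ᵥ φ).re := by
  have h : hQMC n i j = (1 / 2 : ℂ) • ((hQMC n i j)ᴴ * hQMC n i j) := by
    rw [hQMC_herm n i j, hQMC_mul_self n hij, smul_smul]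
    norm_num
  rw [h, Matrix.smul_mulVec, dotProduct_smul, smul_eq_mul,
    show ((1 / 2 : ℂ)) = ((1 / 2 : ℝ) : ℂ) by norm_num, Complex.re_ofReal_mul]
  have key : star φ ⬝ᵥ (((hQMC n i j)ᴴ * hQMC n i j) *ᵥ φ)
      = star (hQMC n i j *ᵥ φ) ⬝ᵥ (hQMC n i j *ᵥ φ) := by
    rw [← Matrix.mulVec_mulVec, Matrix.dotProduct_mulVec, ← Matrix.star_mulVec]
  rw [key]
  have := dot_self_re_nonneg (hQMC n i j *ᵥ φ)
  positivity

end QMCProof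
namespace QMCProof

open Complex

variable {n : ℕ}

lemma fin2_cases (a : Fin 2) : a = 0 ∨ a = 1 := by omega

/-- On off-diagonal pairs, the `hT` entry is the absolute value of the `hQMC` entry. -/
lemma hT_entry_abs {i j : Fin n} (hij : i ≠ j) (x y : QState n) :
    hT n i j x y = ((‖hQMC n i j x y‖ : ℝ) : ℂ) := by
  set D := ∏ l ∈ Finset.univ \ ({i, j} : Finset (Fin n)), (if x l = y l then (1:ℂ) else 0)
    with hD
  have hone : (1 : Matrix (QState n) (QState n) ℂ) x y
      = (if x i = y i then (1:ℂ) else 0) * (if x j = y j then (1:ℂ) else 0) * D := by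
    conv_lhs => rw [← twoSite_one_one n hij]
    simp only [twoSite, Matrix.of_apply, Matrix.one_apply, hD]
  have hQ : hQMC n i j x y = (1/2 : ℂ)
      * (((if x i = y i then (1:ℂ) else 0) * (if x j = y j then (1:ℂ) else 0)
        - pauliX (x i) (y i) * pauliX (x j) (y j)
        - pauliY (x i) (y i) * pauliY (x j) (y j)
        - pauliZ (x i) (y i) * pauliZ (x j) (y j)) * D) := by
    simp only [hQMC, Matrix.smul_apply, Matrix.sub_apply, twoSite, Matrix.of_apply,
      smul_eq_mul, hone, ← hD]
    ring
  have hTe : hT n i j x y = (1/2 : ℂ)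
      * (((if x i = y i then (1:ℂ) else 0) * (if x j = y j then (1:ℂ) else 0)
        + pauliX (x i) (y i) * pauliX (x j) (y j)
        + pauliY (x i) (y i) * pauliY (x j) (y j)
        - pauliZ (x i) (y i) * pauliZ (x j) (y j)) * D) := by
    simp only [hT, Matrix.smul_apply, Matrix.sub_apply, Matrix.add_apply, twoSite,
      Matrix.of_apply, smul_eq_mul, hone, ← hD]
    ring
  have hDcases : D = 0 ∨ D = 1 := by
    rw [hD]
    by_cases hall : ∀ l ∈ Finset.univ \ ({i, j} : Finset (Fin n)), x l = y l
    · right; exact Finset.prod_eq_one (fun l hl => if_pos (hall l hl))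
    · left; push_neg at hall; obtain ⟨l, hl, hne⟩ := hall
      exact Finset.prod_eq_zero hl (if_neg hne)
  rcases hDcases with h0 | h1
  · rw [hTe, hQ, h0]; simp
  · rw [hTe, hQ, h1, mul_one, mul_one]
    rcases fin2_cases (x i) with hxi | hxi <;> rcases fin2_cases (x j) with hxj | hxj <;>
      rcases fin2_cases (y i) with hyi | hyi <;> rcases fin2_cases (y j) with hyj | hyj <;>
      rw [hxi, hxj, hyi, hyj] <;>
      norm_num [pauliX, pauliY, pauliZ] <;>
      simp [Complex.norm_def, Complex.normSq] <;> norm_num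

end QMCProof
namespace QMCProof

open Complex

variable {n : ℕ}

lemma conj_bigsumM (U : Matrix (QState n) (QState n) ℂ) (w : Fin n → Fin n → ℝ)
    (h : Fin n → Fin n → Matrix (QState n) (QState n) ℂ) :
    U * ((1 / 2 : ℂ) • ∑ i, ∑ j, (w i j : ℂ) • h i j) * Uᴴ
      = (1 / 2 : ℂ) • ∑ i, ∑ j, (w i j : ℂ) • (U * h i j * Uᴴ) := by
  rw [Matrix.mul_smul, Matrix.smul_mul, Matrix.mul_sum, Matrix.sum_mul]
  congr 1
  apply Finset.sum_congr rfl; intro i _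
  rw [Matrix.mul_sum, Matrix.sum_mul]
  apply Finset.sum_congr rfl; intro j _
  rw [Matrix.mul_smul, Matrix.smul_mul]

lemma UU_conj_HEPR (w : Fin n → Fin n → ℝ) (hdiag : ∀ i, w i i = 0) :
    UU n * HEPR n w * (UU n)ᴴ = HT n w := by
  rw [HEPR, conj_bigsumM, HT]
  congr 1
  apply Finset.sum_congr rfl; intro i _
  apply Finset.sum_congr rfl; intro j _
  by_cases hij : i = j
  · subst hij; rw [hdiag i]; simp
  · rw [UU_conj_hEPR n hij]

lemma maxEig_HT_eq (w : Fin n → Fin n → ℝ) (hdiag : ∀ i, w i i = 0) :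
    maxEigH (HT n w) = maxEigH (HEPR n w) := by
  rw [← UU_conj_HEPR w hdiag]
  exact maxEig_conj (UU n) (HEPR n w) (UU_mul_ct n) (UU_ct_mul n)

lemma abs_HQMC_entry_le (w : Fin n → Fin n → ℝ) (hnonneg : ∀ i j, 0 ≤ w i j)
    (hdiag : ∀ i, w i i = 0) (x y : QState n) :
    ‖HQMC n w x y‖ ≤ (HT n w x y).re := by
  have hQ : HQMC n w x y = ((1 / 2 : ℝ) : ℂ) * ∑ i, ∑ j, (w i j : ℂ) * hQMC n i j x y := by
    simp only [HQMC, Matrix.smul_apply, Matrix.sum_apply, smul_eq_mul]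
    norm_num
  have hTe : (HT n w x y).re = (1 / 2 : ℝ) * ∑ i, ∑ j, w i j * (hT n i j x y).re := by
    simp only [HT, Matrix.smul_apply, Matrix.sum_apply, smul_eq_mul]
    rw [show ((1 / 2 : ℂ)) = ((1 / 2 : ℝ) : ℂ) by norm_num, Complex.re_ofReal_mul,
      Complex.re_sum]
    congr 1
    apply Finset.sum_congr rfl; intro i _
    rw [Complex.re_sum]
    apply Finset.sum_congr rfl; intro j _
    rw [Complex.re_ofReal_mul]
  rw [hQ, hTe, norm_mul, Complex.norm_real, Real.norm_eq_abs, _root_.abs_of_nonneg (by norm_num : (0:ℝ) ≤ 1/2)]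
  apply mul_le_mul_of_nonneg_left _ (by norm_num : (0:ℝ) ≤ 1/2)
  calc ‖∑ i, ∑ j, (w i j : ℂ) * hQMC n i j x y‖
      ≤ ∑ i, ‖∑ j, (w i j : ℂ) * hQMC n i j x y‖ :=
        norm_sum_le _ _
    _ ≤ ∑ i, ∑ j, ‖(w i j : ℂ) * hQMC n i j x y‖ :=
        Finset.sum_le_sum fun i _ => norm_sum_le _ _
    _ ≤ ∑ i, ∑ j, w i j * (hT n i j x y).re := by
        apply Finset.sum_le_sum; intro i _
        apply Finset.sum_le_sum; intro j _
        rw [norm_mul, Complex.norm_real, Real.norm_eq_abs, _root_.abs_of_nonneg (hnonneg i j)]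
        by_cases hij : i = j
        · subst hij; rw [hdiag i]; simp
        · rw [hT_entry_abs hij x y, Complex.ofReal_re]
  
lemma form_le_formT (w : Fin n → Fin n → ℝ) (hnonneg : ∀ i j, 0 ≤ w i j)
    (hdiag : ∀ i, w i i = 0) (ψ : QState n → ℂ) :
    (star ψ ⬝ᵥ HQMC n w *ᵥ ψ).re
      ≤ (star (fun x => ((‖ψ x‖ : ℝ) : ℂ))
          ⬝ᵥ HT n w *ᵥ (fun x => ((‖ψ x‖ : ℝ) : ℂ))).re := by
  have expandL : star ψ ⬝ᵥ HQMC n w *ᵥ ψ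
      = ∑ x, ∑ y, star (ψ x) * (HQMC n w x y * ψ y) := by
    simp [dotProduct, Matrix.mulVec, Finset.mul_sum]
  have expandR : (star (fun x => ((‖ψ x‖ : ℝ) : ℂ))
      ⬝ᵥ HT n w *ᵥ (fun x => ((‖ψ x‖ : ℝ) : ℂ))).re
      = ∑ x, ∑ y, ‖ψ x‖ * (‖ψ y‖ * (HT n w x y).re) := by
    have : (star (fun x => ((‖ψ x‖ : ℝ) : ℂ))
        ⬝ᵥ HT n w *ᵥ (fun x => ((‖ψ x‖ : ℝ) : ℂ)))
        = ∑ x, ∑ y, ((‖ψ x‖ : ℝ) : ℂ) * (HT n w x y * ((‖ψ y‖ : ℝ) : ℂ)) := by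
      simp [dotProduct, Matrix.mulVec, Finset.mul_sum, Complex.conj_ofReal]
    rw [this, Complex.re_sum]
    apply Finset.sum_congr rfl; intro x _
    rw [Complex.re_sum]
    apply Finset.sum_congr rfl; intro y _
    rw [Complex.re_ofReal_mul, mul_comm (HT n w x y), Complex.re_ofReal_mul]
  rw [expandL, expandR]
  calc (∑ x, ∑ y, star (ψ x) * (HQMC n w x y * ψ y)).re
      ≤ ‖∑ x, ∑ y, star (ψ x) * (HQMC n w x y * ψ y)‖ := Complex.re_le_norm _
    _ ≤ ∑ x, ‖∑ y, star (ψ x) * (HQMC n w x y * ψ y)‖ := norm_sum_le _ _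
    _ ≤ ∑ x, ∑ y, ‖star (ψ x) * (HQMC n w x y * ψ y)‖ :=
        Finset.sum_le_sum fun x _ => norm_sum_le _ _
    _ ≤ ∑ x, ∑ y, ‖ψ x‖ * (‖ψ y‖ * (HT n w x y).re) := by
        apply Finset.sum_le_sum; intro x _
        apply Finset.sum_le_sum; intro y _
        rw [norm_mul, norm_mul]
        have h1 : ‖star (ψ x)‖ = ‖ψ x‖ := by
          simp [Complex.star_def]
        rw [h1]
        have h2 : ‖HQMC n w x y‖ * ‖ψ y‖
            ≤ (HT n w x y).re * ‖ψ y‖ :=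
          mul_le_mul_of_nonneg_right (abs_HQMC_entry_le w hnonneg hdiag x y)
            (norm_nonneg _)
        calc ‖ψ x‖ * (‖HQMC n w x y‖ * ‖ψ y‖)
            ≤ ‖ψ x‖ * ((HT n w x y).re * ‖ψ y‖) :=
              mul_le_mul_of_nonneg_left h2 (norm_nonneg _)
          _ = ‖ψ x‖ * (‖ψ y‖ * (HT n w x y).re) := by ring

lemma upper_bound (w : Fin n → Fin n → ℝ) (hnonneg : ∀ i j, 0 ≤ w i j)
    (hdiag : ∀ i, w i i = 0) :
    maxEigH (HQMC n w) ≤ maxEigH (HEPR n w) := by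
  obtain ⟨ψ, hψ1, hψ2⟩ := rayleigh_attained (HQMC_herm n w)
  set φ : QState n → ℂ := fun x => ((‖ψ x‖ : ℝ) : ℂ) with hφ
  have hφnorm : (star φ ⬝ᵥ φ).re = 1 := by
    rw [dot_self_re]
    rw [dot_self_re] at hψ1
    rw [← hψ1]
    apply Finset.sum_congr rfl; intro k _
    rw [hφ]
    simp [Complex.normSq_ofReal, Complex.sq_norm]
    rw [← Complex.sq_norm]
    ring
  have h1 : maxEigH (HQMC n w) ≤ (star φ ⬝ᵥ HT n w *ᵥ φ).re := by
    rw [← hψ2]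
    exact form_le_formT w hnonneg hdiag ψ
  have h2 : (star φ ⬝ᵥ HT n w *ᵥ φ).re ≤ maxEigH (HT n w) * (star φ ⬝ᵥ φ).re :=
    rayleigh_le (HT_herm n w) φ
  rw [hφnorm, mul_one] at h2
  calc maxEigH (HQMC n w) ≤ maxEigH (HT n w) := le_trans h1 h2
    _ = maxEigH (HEPR n w) := maxEig_HT_eq w hdiag

end QMCProof
namespace QMCProof

open Complex

variable {n : ℕ}

def flipBit (b : Fin 2) : Fin 2 := if b = 0 then 1 else 0

lemma flipBit_flipBit (b : Fin 2) : flipBit (flipBit b) = b := by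
  fin_cases b <;> rfl

lemma flipBit_ne (b : Fin 2) : flipBit b ≠ b := by
  fin_cases b <;> simp [flipBit]

lemma flipBit_eq_of_ne {a b : Fin 2} (h : ¬ a = b) : flipBit a = b := by
  fin_cases a <;> fin_cases b <;> simp_all [flipBit]

lemma card_filter_eq {i j : Fin n} (hij : i ≠ j) :
    (Finset.univ.filter (fun s : QState n => s i = s j)).card = 2 ^ (n - 1)
    ∧ (Finset.univ.filter (fun s : QState n => ¬ s i = s j)).card = 2 ^ (n - 1) := by
  classical
  have hcard : (Finset.univ.filter (fun s : QState n => s i = s j)).card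
      + (Finset.univ.filter (fun s : QState n => ¬ s i = s j)).card = 2 ^ n := by
    rw [Finset.card_filter_add_card_filter_not, Finset.card_univ]
    simp [Fintype.card_fun]
  have hbij : (Finset.univ.filter (fun s : QState n => s i = s j)).card
      = (Finset.univ.filter (fun s : QState n => ¬ s i = s j)).card := by
    apply Finset.card_bij' (fun s _ => Function.update s i (flipBit (s i)))
      (fun s _ => Function.update s i (flipBit (s i)))
    · intro s _
      funext l
      by_cases hl : l = i
      · subst hl
        simp [Function.update_self, flipBit_flipBit]
      · rw [Function.update_of_ne hl, Function.update_of_ne hl]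
    · intro s _
      funext l
      by_cases hl : l = i
      · subst hl
        simp [Function.update_self, flipBit_flipBit]
      · rw [Function.update_of_ne hl, Function.update_of_ne hl]
    · intro s hs
      simp only [Finset.mem_filter, Finset.mem_univ, true_and] at hs ⊢
      rw [Function.update_self, Function.update_of_ne (Ne.symm hij), ← hs]
      exact flipBit_ne (s i)
    · intro s hs
      simp only [Finset.mem_filter, Finset.mem_univ, true_and] at hs ⊢
      rw [Function.update_self, Function.update_of_ne (Ne.symm hij)]
      exact flipBit_eq_of_ne hs
  have hpos : 0 < n := i.pos
  have hpow : 2 ^ n = 2 ^ (n - 1) * 2 := by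
    rw [← pow_succ, Nat.sub_add_cancel hpos]
  have h1 : 2 * (Finset.univ.filter (fun s : QState n => s i = s j)).card
      = 2 * 2 ^ (n - 1) := by
    rw [two_mul]
    nth_rewrite 2 [hbij]
    rw [hcard, hpow]
    ring
  have hP := Nat.eq_of_mul_eq_mul_left (by norm_num) h1
  exact ⟨hP, by rw [← hbij]; exact hP⟩

lemma sum_VV_conj_edge {i j : Fin n} (hij : i ≠ j) :
    ∑ s : QState n, (VV n s * hQMC n i j * (VV n s)ᴴ)
      = (2 ^ (n - 1) : ℕ) • (hQMC n i j + hEPR n i j) := by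
  classical
  have h1 : ∀ s : QState n, VV n s * hQMC n i j * (VV n s)ᴴ
      = if s i = s j then hQMC n i j else hEPR n i j := fun s => VV_conj_hQMC n hij s
  rw [Finset.sum_congr rfl (fun s _ => h1 s), Finset.sum_ite, Finset.sum_const,
    Finset.sum_const, (card_filter_eq hij).1, (card_filter_eq hij).2, smul_add]

lemma sum_VV_conj (w : Fin n → Fin n → ℝ) (hdiag : ∀ i, w i i = 0) :
    ∑ s : QState n, (VV n s * HQMC n w * (VV n s)ᴴ)
      = ((2 ^ (n - 1) : ℕ) : ℂ) • (HQMC n w + HEPR n w) := by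
  classical
  have h1 : ∀ s : QState n, VV n s * HQMC n w * (VV n s)ᴴ
      = (1 / 2 : ℂ) • ∑ i, ∑ j, (w i j : ℂ) • (VV n s * hQMC n i j * (VV n s)ᴴ) := by
    intro s
    rw [HQMC, conj_bigsumM]
  rw [Finset.sum_congr rfl (fun s _ => h1 s), ← Finset.smul_sum]
  have h2 : ∑ s : QState n, ∑ i, ∑ j, (w i j : ℂ) • (VV n s * hQMC n i j * (VV n s)ᴴ)
      = ∑ i, ∑ j, ((2 ^ (n - 1) : ℕ) : ℂ) • ((w i j : ℂ) • (hQMC n i j + hEPR n i j)) := by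
    rw [Finset.sum_comm]
    apply Finset.sum_congr rfl; intro i _
    rw [Finset.sum_comm]
    apply Finset.sum_congr rfl; intro j _
    rw [← Finset.smul_sum]
    by_cases hij : i = j
    · subst hij; rw [hdiag i]; simp
    · rw [sum_VV_conj_edge hij, ← Nat.cast_smul_eq_nsmul ℂ]
      exact smul_comm _ _ _
  rw [h2]
  have h3 : ∑ i, ∑ j, ((2 ^ (n - 1) : ℕ) : ℂ) • ((w i j : ℂ) • (hQMC n i j + hEPR n i j))
      = ((2 ^ (n - 1) : ℕ) : ℂ) • ∑ i, ∑ j, (w i j : ℂ) • (hQMC n i j + hEPR n i j) := by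
    rw [Finset.smul_sum]
    apply Finset.sum_congr rfl; intro i _
    rw [Finset.smul_sum]
  rw [h3, smul_comm]
  congr 1
  rw [HQMC, HEPR, ← smul_add, ← Finset.sum_add_distrib]
  congr 1
  apply Finset.sum_congr rfl; intro i _
  rw [← Finset.sum_add_distrib]
  apply Finset.sum_congr rfl; intro j _
  rw [← smul_add]

lemma HQMC_psd (w : Fin n → Fin n → ℝ) (hnonneg : ∀ i j, 0 ≤ w i j)
    (hdiag : ∀ i, w i i = 0) (φ : QState n → ℂ) :
    0 ≤ (star φ ⬝ᵥ HQMC n w *ᵥ φ).re := by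
  rw [HQMC, dot_bigsum]
  apply mul_nonneg (by norm_num)
  apply Finset.sum_nonneg; intro i _
  apply Finset.sum_nonneg; intro j _
  by_cases hij : i = j
  · subst hij; rw [hdiag i]; simp
  · exact mul_nonneg (hnonneg i j) (hQMC_psd hij φ)

lemma lower_bound (w : Fin n → Fin n → ℝ) (hnonneg : ∀ i j, 0 ≤ w i j)
    (hdiag : ∀ i, w i i = 0) :
    maxEigH (HEPR n w) / 2 ≤ maxEigH (HQMC n w) := by
  classical
  obtain ⟨φ, hφ1, hφ2⟩ := rayleigh_attained (HEPR_herm n w)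
  set lQ := maxEigH (HQMC n w) with hlQ
  set lE := maxEigH (HEPR n w) with hlE
  have hlQ0 : 0 ≤ lQ := by
    obtain ⟨ψ, hψ1, hψ2⟩ := rayleigh_attained (HQMC_herm n w)
    rw [hlQ, ← hψ2]
    exact HQMC_psd w hnonneg hdiag ψ
  -- each conjugated form is at most lQ
  have hterm : ∀ s : QState n, (star φ ⬝ᵥ (VV n s * HQMC n w * (VV n s)ᴴ) *ᵥ φ).re ≤ lQ := by
    intro s
    rw [← dot_conj]
    have h := rayleigh_le (HQMC_herm n w) ((VV n s)ᴴ *ᵥ φ)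
    rw [dot_conj_self (VV n s) (VV_mul_ct n s) φ, hφ1, mul_one] at h
    exact h
  -- sum over all s
  have hsum_le : (star φ ⬝ᵥ (∑ s : QState n, VV n s * HQMC n w * (VV n s)ᴴ) *ᵥ φ).re
      ≤ (2 ^ n : ℝ) * lQ := by
    have e1 : (∑ s : QState n, VV n s * HQMC n w * (VV n s)ᴴ) *ᵥ φ
        = ∑ s : QState n, (VV n s * HQMC n w * (VV n s)ᴴ) *ᵥ φ := by
      have t1 := map_sum (mulVecHom φ) (fun s : QState n => VV n s * HQMC n w * (VV n s)ᴴ)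
        Finset.univ
      simpa only [mulVecHom, AddMonoidHom.coe_mk, ZeroHom.coe_mk] using t1
    have e2 : star φ ⬝ᵥ (∑ s : QState n, (VV n s * HQMC n w * (VV n s)ᴴ) *ᵥ φ)
        = ∑ s : QState n, star φ ⬝ᵥ (VV n s * HQMC n w * (VV n s)ᴴ) *ᵥ φ := by
      have t2 := map_sum (dotHom (star φ))
        (fun s : QState n => (VV n s * HQMC n w * (VV n s)ᴴ) *ᵥ φ) Finset.univ
      simpa only [dotHom, AddMonoidHom.coe_mk, ZeroHom.coe_mk] using t2
    rw [e1, e2, Complex.re_sum]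
    calc ∑ s : QState n, (star φ ⬝ᵥ (VV n s * HQMC n w * (VV n s)ᴴ) *ᵥ φ).re
        ≤ ∑ _s : QState n, lQ := Finset.sum_le_sum fun s _ => hterm s
      _ = (2 ^ n : ℝ) * lQ := by
          rw [Finset.sum_const, Finset.card_univ]
          simp [Fintype.card_fun, mul_comm]
  -- the sum equals 2^(n-1) times the sum of the two forms
  have hsum_eq : (star φ ⬝ᵥ (∑ s : QState n, VV n s * HQMC n w * (VV n s)ᴴ) *ᵥ φ).re
      = (2 ^ (n - 1) : ℝ) * ((star φ ⬝ᵥ HQMC n w *ᵥ φ).re + lE) := by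
    rw [sum_VV_conj w hdiag]
    rw [Matrix.smul_mulVec, dotProduct_smul, smul_eq_mul]
    rw [show (((2 ^ (n - 1) : ℕ) : ℂ)) = (((2 ^ (n - 1) : ℕ) : ℝ) : ℂ) by push_cast; ring]
    rw [Complex.re_ofReal_mul, Matrix.add_mulVec, dotProduct_add, Complex.add_re]
    rw [hφ2]
    push_cast
    ring
  have hform : 0 ≤ (star φ ⬝ᵥ HQMC n w *ᵥ φ).re := HQMC_psd w hnonneg hdiag φ
  have hkey : (2 ^ (n - 1) : ℝ) * lE ≤ (2 ^ n : ℝ) * lQ := by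
    calc (2 ^ (n - 1) : ℝ) * lE
        ≤ (2 ^ (n - 1) : ℝ) * ((star φ ⬝ᵥ HQMC n w *ᵥ φ).re + lE) := by
          apply mul_le_mul_of_nonneg_left _ (by positivity)
          linarith
      _ = (star φ ⬝ᵥ (∑ s : QState n, VV n s * HQMC n w * (VV n s)ᴴ) *ᵥ φ).re := hsum_eq.symm
      _ ≤ (2 ^ n : ℝ) * lQ := hsum_le
  have hpow : (2 ^ n : ℝ) ≤ 2 * (2 ^ (n - 1) : ℝ) := by
    rcases Nat.eq_zero_or_pos n with h0 | hpos
    · subst h0; norm_num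
    · conv_lhs => rw [show n = (n - 1) + 1 from (Nat.sub_add_cancel hpos).symm]
      rw [pow_succ]
      linarith [pow_nonneg (by norm_num : (0:ℝ) ≤ 2) (n - 1)]
  have hc : (0:ℝ) < 2 ^ (n - 1) := by positivity
  have h2 : (2 ^ n : ℝ) * lQ ≤ 2 * 2 ^ (n - 1) * lQ := by
    apply mul_le_mul_of_nonneg_right _ hlQ0
    linarith
  have h3 : (2 ^ (n - 1) : ℝ) * lE ≤ (2 ^ (n - 1) : ℝ) * (2 * lQ) := by
    calc (2 ^ (n - 1) : ℝ) * lE ≤ (2 ^ n : ℝ) * lQ := hkey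
      _ ≤ 2 * 2 ^ (n - 1) * lQ := h2
      _ = (2 ^ (n - 1) : ℝ) * (2 * lQ) := by ring
  have h4 : lE ≤ 2 * lQ := (mul_le_mul_iff_right₀ hc).mp h3
  linarith

end QMCProof

/-- For any weighted graph with nonnegative edge weights,
`λ_max(H^EPR(G))/2 ≤ λ_max(H^QMC(G)) ≤ λ_max(H^EPR(G))`. -/
theorem QMC_between_EPR (n : ℕ) (w : Fin n → Fin n → ℝ)
    (hsymm : ∀ i j, w i j = w j i) (hnonneg : ∀ i j, 0 ≤ w i j)
    (hdiag : ∀ i, w i i = 0) :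
    maxEigH (HEPR n w) / 2 ≤ maxEigH (HQMC n w) ∧
    maxEigH (HQMC n w) ≤ maxEigH (HEPR n w) :=
  ⟨QMCProof.lower_bound w hnonneg hdiag, QMCProof.upper_bound w hnonneg hdiag⟩
end
end

section
/- Suppose that for every unweighted graph H with m_H edges and every 1 ≤ k ≤ ⌊n/2⌋ the bound λ_max(L(F_k(H))) ≤ m_H + k holds for all triangle-free H. Then the bound λ_max(L(F_k(G))) ≤ m + k holds for all unweighted graphs G with m edges. Equivalently: if some graph G violates λ_max(L(F_k(G))) ≤ m + k, then some triangle-free graph G' with m' edges violates λ_max(L(F_k(G'))) ≤ m' + k. -/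
open Matrix Finset
open scoped Pointwise

noncomputable section

/-- Edge weight between vertices `A`, `B` of a token graph: nonzero exactly when the
symmetric difference of `A` and `B` is an edge `{a, b}` of `G` with `a ∈ A`, `b ∈ B`,
in which case it is `w a b`. -/
def tokenW {n : ℕ} (w : Fin n → Fin n → ℝ) (A B : Finset (Fin n)) : ℝ :=
  ∑ a ∈ A \ B, ∑ b ∈ B \ A, if A \ {a} = B \ {b} then w a b else 0

/-- Vertices of the `k`-th token graph on `[n]`: the `k`-element subsets. -/
abbrev TokenVert (n k : ℕ) := {s : Finset (Fin n) // s.card = k}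

/-- Weighted adjacency matrix of the `k`-th token graph `F_k(G)`. -/
def tokenA {n : ℕ} (w : Fin n → Fin n → ℝ) (k : ℕ) :
    Matrix (TokenVert n k) (TokenVert n k) ℝ :=
  Matrix.of fun A B => tokenW w A.1 B.1

/-- Weighted degree matrix of `F_k(G)`. -/
def tokenD {n : ℕ} (w : Fin n → Fin n → ℝ) (k : ℕ) :
    Matrix (TokenVert n k) (TokenVert n k) ℝ :=
  Matrix.diagonal fun A => ∑ B : TokenVert n k, tokenW w A.1 B.1

/-- Weighted Laplacian of `F_k(G)`. -/
def tokenL {n : ℕ} (w : Fin n → Fin n → ℝ) (k : ℕ) :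
    Matrix (TokenVert n k) (TokenVert n k) ℝ :=
  tokenD w k - tokenA w k

/-- Weighted signless Laplacian of `F_k(G)`. -/
def tokenQ {n : ℕ} (w : Fin n → Fin n → ℝ) (k : ℕ) :
    Matrix (TokenVert n k) (TokenVert n k) ℝ :=
  tokenD w k + tokenA w k

/-- Indicator weight function of a simple graph. -/
def wOf {n : ℕ} (G : SimpleGraph (Fin n)) [DecidableRel G.Adj] :
    Fin n → Fin n → ℝ := fun i j => if G.Adj i j then 1 else 0

/-! ### Auxiliary lemmas -/

section Aux

variable {n : ℕ}

lemma tokenW_comm {w : Fin n → Fin n → ℝ} (hw : ∀ i j, w i j = w j i)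
    (A B : Finset (Fin n)) : tokenW w A B = tokenW w B A := by
  unfold tokenW
  rw [Finset.sum_comm]
  refine Finset.sum_congr rfl fun b _ => Finset.sum_congr rfl fun a _ => ?_
  rw [hw a b]
  exact if_congr eq_comm rfl rfl

lemma tokenW_add (w₁ w₂ : Fin n → Fin n → ℝ) (A B : Finset (Fin n)) :
    tokenW (fun i j => w₁ i j + w₂ i j) A B = tokenW w₁ A B + tokenW w₂ A B := by
  unfold tokenW
  rw [← Finset.sum_add_distrib]
  refine Finset.sum_congr rfl fun a _ => ?_
  rw [← Finset.sum_add_distrib]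
  refine Finset.sum_congr rfl fun b _ => ?_
  split_ifs <;> simp

lemma tokenW_eq_zero_or (w : Fin n → Fin n → ℝ) (A B : Finset (Fin n)) :
    tokenW w A B = 0 ∨ ∃ a b, a ∈ A ∧ a ∉ B ∧ b ∈ B ∧ b ∉ A ∧ A \ {a} = B \ {b} ∧
      tokenW w A B = w a b := by
  by_cases hex : ∃ a ∈ A \ B, ∃ b ∈ B \ A, A \ {a} = B \ {b}
  · obtain ⟨a, ha, b, hb, hab⟩ := hex
    rw [Finset.mem_sdiff] at ha hb
    right
    refine ⟨a, b, ha.1, ha.2, hb.1, hb.2, hab, ?_⟩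
    unfold tokenW
    rw [Finset.sum_eq_single a]
    · rw [Finset.sum_eq_single b]
      · rw [if_pos hab]
      · intro b' hb' hbb'
        rw [if_neg]
        intro h'
        have h2 : b ∈ B \ ({b'} : Finset (Fin n)) :=
          Finset.mem_sdiff.mpr ⟨hb.1, by simp [hbb'.symm]⟩
        rw [← h', hab] at h2
        simp at h2
      · intro hbn; exact absurd (Finset.mem_sdiff.mpr hb) hbn
    · intro a' _ haa'
      apply Finset.sum_eq_zero
      intro b' _
      rw [if_neg]
      intro h'
      have hmem : a ∈ A \ ({a'} : Finset (Fin n)) :=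
        Finset.mem_sdiff.mpr ⟨ha.1, by simp [haa'.symm]⟩
      rw [h'] at hmem
      exact ha.2 (Finset.mem_sdiff.mp hmem).1
    · intro han; exact absurd (Finset.mem_sdiff.mpr ha) han
  · left
    apply Finset.sum_eq_zero; intro a ha
    apply Finset.sum_eq_zero; intro b hb
    rw [if_neg]; intro h'
    exact hex ⟨a, ha, b, hb, h'⟩

lemma tokenW_nonneg {w : Fin n → Fin n → ℝ} (h0 : ∀ i j, 0 ≤ w i j)
    (A B : Finset (Fin n)) : 0 ≤ tokenW w A B := by
  refine Finset.sum_nonneg fun a _ => Finset.sum_nonneg fun b _ => ?_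
  split_ifs
  · exact h0 a b
  · exact le_refl 0

lemma tokenW_le_one {w : Fin n → Fin n → ℝ} (h1 : ∀ i j, w i j ≤ 1)
    (A B : Finset (Fin n)) : tokenW w A B ≤ 1 := by
  rcases tokenW_eq_zero_or w A B with h | ⟨a, b, _, _, _, _, _, h⟩ <;> rw [h]
  · norm_num
  · exact h1 a b

lemma sdiff_eq_of_tokenW_ne_zero {w : Fin n → Fin n → ℝ} {T : Finset (Fin n)}
    (hsupp : ∀ i j, w i j ≠ 0 → i ∈ T ∧ j ∈ T)
    {A B : Finset (Fin n)} (hne : tokenW w A B ≠ 0) : A \ T = B \ T := by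
  rcases tokenW_eq_zero_or w A B with h | ⟨a, b, haA, haB, hbB, hbA, hab, h⟩
  · exact absurd h hne
  · rw [h] at hne
    obtain ⟨haT, hbT⟩ := hsupp a b hne
    ext x
    simp only [Finset.mem_sdiff]
    constructor
    · rintro ⟨hxA, hxT⟩
      have hxa : x ≠ a := fun e => hxT (e ▸ haT)
      have hx : x ∈ A \ ({a} : Finset (Fin n)) :=
        Finset.mem_sdiff.mpr ⟨hxA, by simp [hxa]⟩
      rw [hab] at hx
      exact ⟨(Finset.mem_sdiff.mp hx).1, hxT⟩
    · rintro ⟨hxB, hxT⟩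
      have hxb : x ≠ b := fun e => hxT (e ▸ hbT)
      have hx : x ∈ B \ ({b} : Finset (Fin n)) :=
        Finset.mem_sdiff.mpr ⟨hxB, by simp [hxb]⟩
      rw [← hab] at hx
      exact ⟨(Finset.mem_sdiff.mp hx).1, hxT⟩

lemma tokenL_isHermitian {w : Fin n → Fin n → ℝ} (hw : ∀ i j, w i j = w j i) (k : ℕ) :
    (tokenL (n := n) w k).IsHermitian := by
  have hW : ∀ A B : TokenVert n k, tokenW w A.1 B.1 = tokenW w B.1 A.1 :=
    fun A B => tokenW_comm hw _ _
  show (tokenL (n := n) w k)ᴴ = tokenL (n := n) w k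
  ext A B
  simp only [conjTranspose_apply, tokenL, tokenD, tokenA, Matrix.sub_apply, of_apply,
    Matrix.diagonal_apply, star_trivial]
  rcases eq_or_ne A B with rfl | hne
  · rfl
  · rw [if_neg hne.symm, if_neg hne, hW]

lemma tokenL_add (w₁ w₂ : Fin n → Fin n → ℝ) (k : ℕ) :
    tokenL (n := n) (fun i j => w₁ i j + w₂ i j) k = tokenL w₁ k + tokenL w₂ k := by
  ext A B
  simp only [tokenL, tokenD, tokenA, Matrix.sub_apply, Matrix.add_apply, of_apply, Matrix.diagonal_apply,
    tokenW_add]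
  split_ifs
  · rw [Finset.sum_add_distrib]; ring
  · ring

/-- The quadratic form of the token Laplacian. -/
lemma quadForm_tokenL (w : Fin n → Fin n → ℝ) (hw : ∀ i j, w i j = w j i) (k : ℕ)
    (x : TokenVert n k → ℝ) :
    2 * (x ⬝ᵥ (tokenL w k).mulVec x) =
      ∑ A : TokenVert n k, ∑ B : TokenVert n k, tokenW w A.1 B.1 * (x A - x B) ^ 2 := by
  have hW : ∀ A B : TokenVert n k, tokenW w A.1 B.1 = tokenW w B.1 A.1 :=
    fun A B => tokenW_comm hw _ _
  have hmv : ∀ A : TokenVert n k, (tokenL w k).mulVec x A =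
      (∑ B : TokenVert n k, tokenW w A.1 B.1 * x A)
        - ∑ B : TokenVert n k, tokenW w A.1 B.1 * x B := by
    intro A
    simp only [tokenL, tokenD, tokenA, mulVec, dotProduct, Matrix.sub_apply, of_apply,
      Matrix.diagonal_apply, sub_mul, ite_mul, zero_mul, Finset.sum_sub_distrib,
      Finset.sum_ite_eq, Finset.mem_univ, if_true]
    rw [Finset.sum_mul]
  have hlhs : x ⬝ᵥ (tokenL w k).mulVec x =
      (∑ A : TokenVert n k, ∑ B : TokenVert n k, tokenW w A.1 B.1 * (x A * x A))
        - ∑ A : TokenVert n k, ∑ B : TokenVert n k, tokenW w A.1 B.1 * (x A * x B) := by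
    rw [← Finset.sum_sub_distrib]
    simp only [dotProduct, hmv]
    refine Finset.sum_congr rfl fun A _ => ?_
    rw [mul_sub, Finset.mul_sum, Finset.mul_sum, ← Finset.sum_sub_distrib,
      ← Finset.sum_sub_distrib]
    exact Finset.sum_congr rfl fun B _ => by ring
  have hswap : (∑ A : TokenVert n k, ∑ B : TokenVert n k, tokenW w A.1 B.1 * (x B * x B))
      = ∑ A : TokenVert n k, ∑ B : TokenVert n k, tokenW w A.1 B.1 * (x A * x A) := by
    rw [Finset.sum_comm]
    exact Finset.sum_congr rfl fun B _ => Finset.sum_congr rfl fun A _ => by rw [hW]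
  have hrhs : ∑ A : TokenVert n k, ∑ B : TokenVert n k, tokenW w A.1 B.1 * (x A - x B) ^ 2
      = (∑ A : TokenVert n k, ∑ B : TokenVert n k, tokenW w A.1 B.1 * (x A * x A))
        - 2 * (∑ A : TokenVert n k, ∑ B : TokenVert n k, tokenW w A.1 B.1 * (x A * x B))
        + ∑ A : TokenVert n k, ∑ B : TokenVert n k, tokenW w A.1 B.1 * (x B * x B) := by
    rw [Finset.mul_sum, ← Finset.sum_sub_distrib, ← Finset.sum_add_distrib]
    refine Finset.sum_congr rfl fun A _ => ?_
    rw [Finset.mul_sum, ← Finset.sum_sub_distrib, ← Finset.sum_add_distrib]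
    exact Finset.sum_congr rfl fun B _ => by ring
  rw [hlhs, hrhs, hswap]
  ring

lemma choose_three_le (j : ℕ) : Nat.choose 3 j ≤ 3 := by
  match j with
  | 0 => decide
  | 1 => decide
  | 2 => decide
  | 3 => decide
  | (j + 4) => rw [Nat.choose_eq_zero_of_lt (by omega)]; omega

lemma fiber_card_le {k : ℕ} {T : Finset (Fin n)} (hT : T.card = 3) (S : Finset (Fin n)) :
    ((univ : Finset (TokenVert n k)).filter (fun A => A.1 \ T = S)).card ≤ 3 := by
  classical
  have hle : ((univ : Finset (TokenVert n k)).filter (fun A => A.1 \ T = S)).card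
      ≤ (T.powersetCard (k - S.card)).card := by
    apply Finset.card_le_card_of_injOn (fun A => A.1 ∩ T)
    · intro A hA
      rw [Finset.mem_coe, Finset.mem_filter] at hA
      show A.1 ∩ T ∈ T.powersetCard (k - S.card)
      rw [Finset.mem_powersetCard]
      refine ⟨Finset.inter_subset_right, ?_⟩
      have h1 : (A.1 ∩ T).card + (A.1 \ T).card = A.1.card :=
        Finset.card_inter_add_card_sdiff A.1 T
      rw [hA.2, A.2] at h1
      omega
    · intro A hA B hB hAB
      have hAB' : A.1 ∩ T = B.1 ∩ T := hAB
      rw [Finset.mem_coe, Finset.mem_filter] at hA hB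
      apply Subtype.ext
      ext v
      by_cases hv : v ∈ T
      · constructor
        · intro hvA
          have : v ∈ A.1 ∩ T := Finset.mem_inter.mpr ⟨hvA, hv⟩
          rw [hAB'] at this
          exact (Finset.mem_inter.mp this).1
        · intro hvB
          have : v ∈ B.1 ∩ T := Finset.mem_inter.mpr ⟨hvB, hv⟩
          rw [← hAB'] at this
          exact (Finset.mem_inter.mp this).1
      · constructor
        · intro hvA
          have : v ∈ A.1 \ T := Finset.mem_sdiff.mpr ⟨hvA, hv⟩
          rw [hA.2, ← hB.2] at this
          exact (Finset.mem_sdiff.mp this).1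
        · intro hvB
          have : v ∈ B.1 \ T := Finset.mem_sdiff.mpr ⟨hvB, hv⟩
          rw [hB.2, ← hA.2] at this
          exact (Finset.mem_sdiff.mp this).1
  calc ((univ : Finset (TokenVert n k)).filter (fun A => A.1 \ T = S)).card
      ≤ (T.powersetCard (k - S.card)).card := hle
    _ = Nat.choose 3 (k - S.card) := by rw [Finset.card_powersetCard, hT]
    _ ≤ 3 := choose_three_le _

/-- Per-fiber expansion inequality. -/
lemma fiber_sq_bound {a : Type*} (C : Finset a) (hC : C.card ≤ 3) (x : a → ℝ) :
    ∑ A ∈ C, ∑ B ∈ C, (x A - x B) ^ 2 ≤ 6 * ∑ A ∈ C, x A ^ 2 := by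
  have e1 : ∑ A ∈ C, ∑ B ∈ C, x A * x B = (∑ A ∈ C, x A) * ∑ A ∈ C, x A :=
    (Finset.sum_mul_sum C C x x).symm
  have e2 : ∑ A ∈ C, ∑ _B ∈ C, x A ^ 2 = (C.card : ℝ) * ∑ A ∈ C, x A ^ 2 := by
    rw [Finset.mul_sum]
    refine Finset.sum_congr rfl fun A _ => ?_
    rw [Finset.sum_const, nsmul_eq_mul]
  have e3 : ∑ _A ∈ C, ∑ B ∈ C, x B ^ 2 = (C.card : ℝ) * ∑ A ∈ C, x A ^ 2 := by
    rw [Finset.sum_const, nsmul_eq_mul]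
  have expand : ∑ A ∈ C, ∑ B ∈ C, (x A - x B) ^ 2
      = (∑ A ∈ C, ∑ _B ∈ C, x A ^ 2) - 2 * (∑ A ∈ C, ∑ B ∈ C, x A * x B)
        + ∑ _A ∈ C, ∑ B ∈ C, x B ^ 2 := by
    rw [Finset.mul_sum, ← Finset.sum_sub_distrib, ← Finset.sum_add_distrib]
    refine Finset.sum_congr rfl fun A _ => ?_
    rw [Finset.mul_sum, ← Finset.sum_sub_distrib, ← Finset.sum_add_distrib]
    exact Finset.sum_congr rfl fun B _ => by ring
  rw [expand, e1, e2, e3]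
  have hc : (C.card : ℝ) ≤ 3 := by exact_mod_cast hC
  have hS2 : (0 : ℝ) ≤ ∑ A ∈ C, x A ^ 2 := Finset.sum_nonneg fun A _ => sq_nonneg _
  nlinarith [sq_nonneg (∑ A ∈ C, x A)]

/-- Quadratic-form bound for the token Laplacian of a weight supported on a triangle. -/
lemma quadForm_tokenL_tri {w : Fin n → Fin n → ℝ} {T : Finset (Fin n)} (hT : T.card = 3)
    (hw : ∀ i j, w i j = w j i) (h0 : ∀ i j, 0 ≤ w i j) (h1 : ∀ i j, w i j ≤ 1)
    (hsupp : ∀ i j, w i j ≠ 0 → i ∈ T ∧ j ∈ T) (k : ℕ) (x : TokenVert n k → ℝ) :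
    x ⬝ᵥ (tokenL w k).mulVec x ≤ 3 * (x ⬝ᵥ x) := by
  classical
  have key := quadForm_tokenL w hw k x
  set F : Finset (Fin n) → Finset (TokenVert n k) :=
    fun S => (univ : Finset (TokenVert n k)).filter (fun A => A.1 \ T = S) with hF
  have hstep1 : ∑ A : TokenVert n k, ∑ B : TokenVert n k, tokenW w A.1 B.1 * (x A - x B) ^ 2
      ≤ ∑ A : TokenVert n k, ∑ B ∈ F (A.1 \ T), (x A - x B) ^ 2 := by
    refine Finset.sum_le_sum fun A _ => ?_
    have hflt : ∑ B ∈ F (A.1 \ T), (x A - x B) ^ 2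
        = ∑ B : TokenVert n k, if B.1 \ T = A.1 \ T then (x A - x B) ^ 2 else 0 := by
      rw [hF, Finset.sum_filter]
    rw [hflt]
    refine Finset.sum_le_sum fun B _ => ?_
    by_cases hz : tokenW w A.1 B.1 = 0
    · rw [hz, zero_mul]
      split_ifs
      · positivity
      · exact le_refl (0 : ℝ)
    · have hfib := sdiff_eq_of_tokenW_ne_zero hsupp hz
      rw [if_pos hfib.symm]
      have hle1 := tokenW_le_one h1 A.1 B.1
      nlinarith [sq_nonneg (x A - x B), tokenW_nonneg h0 A.1 B.1]
  have hgroup : ∑ A : TokenVert n k, ∑ B ∈ F (A.1 \ T), (x A - x B) ^ 2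
      = ∑ S : Finset (Fin n), ∑ A ∈ F S, ∑ B ∈ F S, (x A - x B) ^ 2 := by
    rw [← Finset.sum_fiberwise (univ : Finset (TokenVert n k)) (fun A => A.1 \ T)
      (fun A => ∑ B ∈ F (A.1 \ T), (x A - x B) ^ 2)]
    refine Finset.sum_congr rfl fun S _ => Finset.sum_congr rfl fun A hA => ?_
    rw [hF] at hA ⊢
    rw [Finset.mem_filter] at hA
    rw [hA.2]
  have hcards : ∀ S : Finset (Fin n), (F S).card ≤ 3 := fun S => fiber_card_le hT S
  have hsum2 : ∑ S : Finset (Fin n), ∑ A ∈ F S, ∑ B ∈ F S, (x A - x B) ^ 2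
      ≤ 6 * ∑ A : TokenVert n k, x A ^ 2 := by
    calc ∑ S : Finset (Fin n), ∑ A ∈ F S, ∑ B ∈ F S, (x A - x B) ^ 2
        ≤ ∑ S : Finset (Fin n), 6 * ∑ A ∈ F S, x A ^ 2 :=
          Finset.sum_le_sum fun S _ => fiber_sq_bound (F S) (hcards S) x
      _ = 6 * ∑ S : Finset (Fin n), ∑ A ∈ F S, x A ^ 2 := by rw [Finset.mul_sum]
      _ = 6 * ∑ A : TokenVert n k, x A ^ 2 := by
          rw [Finset.sum_fiberwise (univ : Finset (TokenVert n k)) (fun A => A.1 \ T)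
            (fun A => x A ^ 2)]
  have hdot : x ⬝ᵥ x = ∑ A : TokenVert n k, x A ^ 2 := by
    simp [dotProduct, sq]
  have h6 : ∑ A : TokenVert n k, ∑ B : TokenVert n k, tokenW w A.1 B.1 * (x A - x B) ^ 2
      ≤ 6 * ∑ A : TokenVert n k, x A ^ 2 :=
    hstep1.trans ((le_of_eq hgroup).trans hsum2)
  rw [hdot]
  linarith [key, h6]

/-- Quadratic form bound from a spectrum bound, for Hermitian real matrices. -/
lemma quad_le_of_spectrum_le {N : Type*} [Fintype N] [DecidableEq N] {M : Matrix N N ℝ}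
    (hM : M.IsHermitian) {c : ℝ} (hspec : ∀ μ ∈ spectrum ℝ M, μ ≤ c) (x : N → ℝ) :
    x ⬝ᵥ M.mulVec x ≤ c * (x ⬝ᵥ x) := by
  have h1 : ((c • (1 : Matrix N N ℝ)) - M).IsHermitian := by
    refine Matrix.IsHermitian.sub ?_ hM
    simp [Matrix.IsHermitian]
  have hPSD : ((c • (1 : Matrix N N ℝ)) - M).PosSemidef := by
    refine h1.posSemidef_iff_eigenvalues_nonneg.mpr fun i => ?_
    have hmem := h1.eigenvalues_mem_spectrum_real i
    have heq : c • (1 : Matrix N N ℝ) - M = algebraMap ℝ (Matrix N N ℝ) c - M := by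
      rw [Algebra.algebraMap_eq_smul_one]
    have hmem2 : h1.eigenvalues i ∈ ({c} : Set ℝ) - spectrum ℝ M := by
      rw [spectrum.singleton_sub_eq, ← heq]
      exact hmem
    obtain ⟨r, hr, s, hs, hrs⟩ := Set.mem_sub.mp hmem2
    rw [Set.mem_singleton_iff] at hr
    subst hr
    have hsc := hspec s hs
    rw [← hrs]
    rw [Pi.zero_apply]
    linarith
  have h2 := hPSD.dotProduct_mulVec_nonneg x
  have h3 : (c • (1 : Matrix N N ℝ) - M).mulVec x = c • x - M.mulVec x := by
    rw [Matrix.sub_mulVec, Matrix.smul_mulVec, Matrix.one_mulVec]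
  rw [h3, star_trivial] at h2
  rw [dotProduct_sub, dotProduct_smul, smul_eq_mul] at h2
  linarith

/-- Spectrum bound from a quadratic form bound. -/
lemma spectrum_le_of_quad_le {N : Type*} [Fintype N] [DecidableEq N] {M : Matrix N N ℝ} {c : ℝ}
    (hq : ∀ x : N → ℝ, x ⬝ᵥ M.mulVec x ≤ c * (x ⬝ᵥ x)) :
    ∀ μ ∈ spectrum ℝ M, μ ≤ c := by
  intro μ hμ
  rw [spectrum.mem_iff] at hμ
  have hdet : (algebraMap ℝ (Matrix N N ℝ) μ - M).det = 0 := by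
    by_contra hne
    exact hμ ((Matrix.isUnit_iff_isUnit_det _).mpr (Ne.isUnit hne))
  obtain ⟨v, hv0, hv⟩ := Matrix.exists_mulVec_eq_zero_iff.mpr hdet
  have hMv : M.mulVec v = μ • v := by
    have heq : (algebraMap ℝ (Matrix N N ℝ) μ - M).mulVec v = μ • v - M.mulVec v := by
      rw [Matrix.sub_mulVec, Algebra.algebraMap_eq_smul_one, Matrix.smul_mulVec,
        Matrix.one_mulVec]
    rw [heq] at hv
    exact (sub_eq_zero.mp hv).symm
  have hnn : 0 ≤ v ⬝ᵥ v := Finset.sum_nonneg fun i _ => mul_self_nonneg (v i)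
  have hvv : 0 < v ⬝ᵥ v := by
    rcases hnn.lt_or_eq with hlt | heq0
    · exact hlt
    · exact absurd (dotProduct_self_eq_zero.mp heq0.symm) hv0
  have h3 := hq v
  rw [hMv, dotProduct_smul, smul_eq_mul] at h3
  exact (mul_le_mul_iff_left₀ hvv).mp h3

end Aux

/-- If the bound `λ_max(L(F_k(H))) ≤ m_H + k` holds for all triangle-free unweighted
graphs `H`, then it holds for all unweighted graphs `G`. -/
theorem tokenL_bound_of_triangleFree_bound
    (h : ∀ (n : ℕ) (H : SimpleGraph (Fin n)) [DecidableRel H.Adj] (k : ℕ),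
      H.CliqueFree 3 → 1 ≤ k → 2 * k ≤ n →
      ∀ μ ∈ spectrum ℝ (tokenL (wOf H) k), μ ≤ (H.edgeFinset.card : ℝ) + (k : ℝ)) :
    ∀ (n : ℕ) (G : SimpleGraph (Fin n)) [DecidableRel G.Adj] (k : ℕ),
      1 ≤ k → 2 * k ≤ n →
      ∀ μ ∈ spectrum ℝ (tokenL (wOf G) k), μ ≤ (G.edgeFinset.card : ℝ) + (k : ℝ) := by
  intro n G instG k hk hkn
  suffices Hs : ∀ (m : ℕ) (G : SimpleGraph (Fin n)) (inst : DecidableRel G.Adj),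
      G.edgeFinset.card ≤ m →
      ∀ μ ∈ spectrum ℝ (tokenL (wOf G) k), μ ≤ (G.edgeFinset.card : ℝ) + (k : ℝ) by
    exact Hs G.edgeFinset.card G instG le_rfl
  intro m
  induction m with
  | zero =>
    intro G instG hm
    refine h n G k ?_ hk hkn
    have hempty : G.edgeFinset = ∅ := Finset.card_eq_zero.mp (Nat.le_zero.mp hm)
    intro t ht
    obtain ⟨a, b, c, hab, hac, hbc, rfl⟩ := Finset.card_eq_three.mp ht.2
    have hadj : G.Adj a b := ht.1 (by simp) (by simp) hab
    have : s(a, b) ∈ G.edgeFinset := by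
      rw [SimpleGraph.mem_edgeFinset]
      exact hadj
    rw [hempty] at this
    exact absurd this (Finset.notMem_empty _)
  | succ m IH =>
    intro G instG hm
    by_cases hfree : G.CliqueFree 3
    · exact h n G k hfree hk hkn
    · rw [SimpleGraph.CliqueFree] at hfree
      push_neg at hfree
      obtain ⟨t, ht⟩ := hfree
      obtain ⟨a, b, c, hab, hac, hbc, rfl⟩ := Finset.card_eq_three.mp ht.2
      have hAab : G.Adj a b := ht.1 (by simp) (by simp) hab
      have hAbc : G.Adj b c := ht.1 (by simp) (by simp) hbc
      have hAac : G.Adj a c := ht.1 (by simp) (by simp) hac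
      classical
      set E : Finset (Sym2 (Fin n)) := {s(a, b), s(b, c), s(a, c)} with hE
      set H : SimpleGraph (Fin n) := G.deleteEdges ↑E with hH
      letI instH : DecidableRel H.Adj := fun i j =>
        decidable_of_iff (G.Adj i j ∧ s(i, j) ∉ E) (by
          rw [hH, SimpleGraph.deleteEdges_adj, Finset.mem_coe])
      -- edge counting
      have e1 : s(a, b) ≠ s(b, c) := by
        intro hcontra
        rw [Sym2.eq_iff] at hcontra
        rcases hcontra with ⟨h1, _⟩ | ⟨h1, _⟩
        exacts [hab h1, hac h1]
      have e2 : s(a, b) ≠ s(a, c) := by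
        intro hcontra
        rw [Sym2.eq_iff] at hcontra
        rcases hcontra with ⟨_, h1⟩ | ⟨h1, _⟩
        exacts [hbc h1, hac h1]
      have e3 : s(b, c) ≠ s(a, c) := by
        intro hcontra
        rw [Sym2.eq_iff] at hcontra
        rcases hcontra with ⟨h1, _⟩ | ⟨h1, _⟩
        exacts [hab h1.symm, hbc h1]
      have hEcard : E.card = 3 :=
        Finset.card_eq_three.mpr ⟨s(a, b), s(b, c), s(a, c), e1, e2, e3, rfl⟩
      have hEsub : E ⊆ G.edgeFinset := by
        intro e he
        rw [hE] at he
        simp only [Finset.mem_insert, Finset.mem_singleton] at he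
        rcases he with rfl | rfl | rfl <;> rw [SimpleGraph.mem_edgeFinset]
        exacts [hAab, hAbc, hAac]
      have hHfin : H.edgeFinset = G.edgeFinset \ E := by
        ext e
        rw [SimpleGraph.mem_edgeFinset, Finset.mem_sdiff, SimpleGraph.mem_edgeFinset, hH,
          SimpleGraph.edgeSet_deleteEdges, Set.mem_diff, Finset.mem_coe]
      have hHcard : H.edgeFinset.card + 3 = G.edgeFinset.card := by
        rw [hHfin, Finset.card_sdiff_of_subset hEsub, hEcard]
        have : 3 ≤ G.edgeFinset.card := hEcard ▸ Finset.card_le_card hEsub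
        omega
      have hmH : H.edgeFinset.card ≤ m := by omega
      have specH := IH H instH hmH
      -- weight functions
      have hGsym : ∀ i j, wOf G i j = wOf G j i := by
        intro i j; simp [wOf, G.adj_comm]
      have hHsym : ∀ i j, wOf H i j = wOf H j i := by
        intro i j; simp [wOf, H.adj_comm]
      set wΔ : Fin n → Fin n → ℝ := fun i j => wOf G i j - wOf H i j with hwΔ
      have hHG : ∀ i j, H.Adj i j → G.Adj i j := by
        intro i j hij
        rw [hH, SimpleGraph.deleteEdges_adj] at hij
        exact hij.1
      have hΔsym : ∀ i j, wΔ i j = wΔ j i := by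
        intro i j; rw [hwΔ]; simp only; rw [hGsym, hHsym]
      have hΔ0 : ∀ i j, 0 ≤ wΔ i j := by
        intro i j
        rw [hwΔ]; simp only [wOf]
        split_ifs with h1 h2 h3
        · norm_num
        · norm_num
        · exact absurd (hHG i j h3) h1
        · norm_num
      have hΔ1 : ∀ i j, wΔ i j ≤ 1 := by
        intro i j
        rw [hwΔ]; simp only [wOf]
        split_ifs <;> norm_num
      set T : Finset (Fin n) := {a, b, c} with hT
      have hTcard : T.card = 3 := ht.2
      have hΔsupp : ∀ i j, wΔ i j ≠ 0 → i ∈ T ∧ j ∈ T := by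
        intro i j hne
        rw [hwΔ] at hne
        simp only [wOf] at hne
        have hGij : G.Adj i j := by
          by_contra hc
          rw [if_neg hc, if_neg (fun hh => hc (hHG i j hh))] at hne
          exact hne (by norm_num)
        have hHij : ¬ H.Adj i j := by
          intro hc
          rw [if_pos hGij, if_pos hc] at hne
          exact hne (by norm_num)
        rw [hH, SimpleGraph.deleteEdges_adj] at hHij
        push_neg at hHij
        have hmemE : s(i, j) ∈ E := Finset.mem_coe.mp (hHij hGij)
        rw [hE] at hmemE
        simp only [Finset.mem_insert, Finset.mem_singleton] at hmemE
        rw [hT]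
        rcases hmemE with he | he | he <;> rw [Sym2.eq_iff] at he <;>
          rcases he with ⟨rfl, rfl⟩ | ⟨rfl, rfl⟩ <;> simp
      -- split the Laplacian
      have hsplit : wOf G = fun i j => wOf H i j + wΔ i j := by
        funext i j; rw [hwΔ]; ring
      have hLsplit : tokenL (wOf G) k = tokenL (wOf H) k + tokenL wΔ k := by
        rw [hsplit, tokenL_add]
      -- quadratic bounds
      have hHermH : (tokenL (wOf H) k).IsHermitian := tokenL_isHermitian hHsym k
      have quadH := fun x => quad_le_of_spectrum_le hHermH specH x
      have quadΔ := fun x => quadForm_tokenL_tri hTcard hΔsym hΔ0 hΔ1 hΔsupp k x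
      have quadG : ∀ x : TokenVert n k → ℝ,
          x ⬝ᵥ (tokenL (wOf G) k).mulVec x ≤ ((G.edgeFinset.card : ℝ) + k) * (x ⬝ᵥ x) := by
        intro x
        have hx2 : 0 ≤ x ⬝ᵥ x := Finset.sum_nonneg fun i _ => mul_self_nonneg (x i)
        have := quadH x
        have := quadΔ x
        have hcast : (G.edgeFinset.card : ℝ) = (H.edgeFinset.card : ℝ) + 3 := by
          exact_mod_cast congrArg (Nat.cast : ℕ → ℝ) hHcard.symm
        rw [hLsplit, Matrix.add_mulVec, dotProduct_add]
        rw [hcast]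
        nlinarith [quadH x, quadΔ x]
      exact spectrum_le_of_quad_le quadG
end
end

section
/- Let G = (V, E) be a graph and suppose z : E → ℝ satisfies z ≥ 0, the degree constraints Σ_{j ∈ N(i)} z_{ij} ≤ 1 for all i ∈ V, and the odd-set constraints Σ_{(i,j) ∈ E(S)} z_{ij} ≤ (|S|-1)/2 for all odd subsets S ⊆ V. Then for every T ⊆ V and F ⊆ δ(T) with |T| + |F| odd, z also satisfies Σ_{(i,j) ∈ E(T) ∪ F} z_{ij} ≤ (|T| + |F| - 1)/2. -/
open Finset

noncomputable section

private lemma aux_union_sum_le {β : Type*} [DecidableEq β] (A B : Finset β) (f : β → ℝ)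
    (hf : ∀ b ∈ B, 0 ≤ f b) : ∑ b ∈ A ∪ B, f b ≤ ∑ b ∈ A, f b + ∑ b ∈ B, f b := by
  rw [← Finset.union_sdiff_self_eq_union, Finset.sum_union Finset.disjoint_sdiff]
  exact add_le_add_right
    (Finset.sum_le_sum_of_subset_of_nonneg Finset.sdiff_subset (fun b hb _ => hf b hb)) _

private lemma aux_biUnion_sum_le {α β : Type*} [DecidableEq β] (s : Finset α) (t : α → Finset β)
    (f : β → ℝ) (hf : ∀ b ∈ s.biUnion t, 0 ≤ f b) :
    ∑ b ∈ s.biUnion t, f b ≤ ∑ a ∈ s, ∑ b ∈ t a, f b := by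
  classical
  induction s using Finset.induction with
  | empty => simp
  | insert a s hx ih =>
    rw [Finset.biUnion_insert] at hf ⊢
    rw [Finset.sum_insert hx]
    refine le_trans (aux_union_sum_le _ _ _ (fun b hb => hf b (Finset.mem_union_right _ hb))) ?_
    exact add_le_add_right (ih (fun b hb => hf b (Finset.mem_union_right _ hb))) _

private lemma aux_out {V : Type*} [DecidableEq V] {T : Finset V} {e : Sym2 V}
    (h1 : ∃ v ∈ e, v ∈ T) (h2 : ∃ v ∈ e, v ∉ T) :
    ∃ a b, a ∈ T ∧ b ∉ T ∧ e = s(a, b) := by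
  induction e using Sym2.ind with
  | _ x y =>
    obtain ⟨v, hv, hvT⟩ := h1
    obtain ⟨w, hw, hwT⟩ := h2
    rw [Sym2.mem_iff] at hv hw
    rcases hv with rfl | rfl <;> rcases hw with rfl | rfl
    · exact absurd hvT hwT
    · exact ⟨v, w, hvT, hwT, rfl⟩
    · exact ⟨v, w, hvT, hwT, Sym2.eq_swap⟩
    · exact absurd hvT hwT

/-- If `z : E → ℝ` is nonnegative and satisfies the degree constraints and the odd-set
constraints of the matching polytope of `G`, then it also satisfies all
blossom-with-teeth constraints: for any `T ⊆ V` and any set `F` of edges crossing `T`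
with `|T| + |F|` odd, `Σ_{e ∈ E(T) ∪ F} z_e ≤ (|T| + |F| - 1)/2`. -/
theorem matching_polytope_implies_blossom_teeth
    {V : Type*} [Fintype V] [DecidableEq V]
    (G : SimpleGraph V) [DecidableRel G.Adj] (z : Sym2 V → ℝ)
    (hnonneg : ∀ e ∈ G.edgeFinset, 0 ≤ z e)
    (hdeg : ∀ i : V, ∑ e ∈ G.incidenceFinset i, z e ≤ 1)
    (hodd : ∀ S : Finset V, Odd S.card →
      ∑ e ∈ G.edgeFinset.filter (fun e => ∀ v ∈ e, v ∈ S), z e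
        ≤ ((S.card : ℝ) - 1) / 2) :
    ∀ (T : Finset V)
      (F : Finset (Sym2 V)),
      F ⊆ G.edgeFinset.filter
        (fun e => (∃ v ∈ e, v ∈ T) ∧ (∃ v ∈ e, v ∉ T)) →
      Odd (T.card + F.card) →
      ∑ e ∈ (G.edgeFinset.filter (fun e => ∀ v ∈ e, v ∈ T)) ∪ F, z e
        ≤ (((T.card : ℝ) + (F.card : ℝ)) - 1) / 2 := by
  intro T F hF hoddTF
  classical
  set d : V → ℕ := fun u => (F.filter (fun e => u ∈ e)).card with hd
  set Out : Finset V := univ.filter (fun u => u ∉ T) with hOut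
  set Uo : Finset V := Out.filter (fun u => Odd (d u)) with hUo
  set Ue : Finset V := Out.filter (fun u => ¬ Odd (d u) ∧ d u ≠ 0) with hUe
  set S : Finset V := T ∪ Uo with hS
  -- every edge of F is in edgeFinset and crosses T
  have hFe : ∀ e ∈ F, ∃ a b, a ∈ T ∧ b ∉ T ∧ e = s(a, b) := by
    intro e he
    have := hF he
    rw [Finset.mem_filter] at this
    exact aux_out this.2.1 this.2.2
  -- double counting: ∑_{u ∉ T} d u = |F|
  have hcount : ∑ u ∈ Out, d u = F.card := by
    have : ∀ u, d u = ∑ e ∈ F, if u ∈ e then 1 else 0 :=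
      fun u => Finset.card_filter _ _
    simp_rw [this]
    rw [Finset.sum_comm]
    rw [Finset.card_eq_sum_ones F]
    apply Finset.sum_congr rfl
    intro e he
    obtain ⟨a, b, haT, hbT, rfl⟩ := hFe e he
    have hab : a ≠ b := fun h => hbT (h ▸ haT)
    rw [← Finset.card_filter]
    rw [Finset.card_eq_one]
    refine ⟨b, ?_⟩
    ext u
    simp only [Finset.mem_filter, hOut, Finset.mem_univ, true_and, Sym2.mem_iff,
      Finset.mem_singleton]
    constructor
    · rintro ⟨hu, rfl | rfl⟩
      · exact absurd haT hu
      · rfl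
    · rintro rfl; exact ⟨hbT, Or.inr rfl⟩
  -- parity: |S| is odd
  have hdisjTUo : Disjoint T Uo := by
    rw [Finset.disjoint_left]
    intro u hu hu'
    rw [hUo, Finset.mem_filter, hOut, Finset.mem_filter] at hu'
    exact hu'.1.2 hu
  have hScard : S.card = T.card + Uo.card := Finset.card_union_of_disjoint hdisjTUo
  have hparF : Even (F.card) ↔ Even (Uo.card) := by
    rw [← hcount, Finset.even_sum_iff_even_card_odd, hUo]
  have hSodd : Odd S.card := by
    rw [hScard]
    rw [Nat.odd_add] at hoddTF ⊢
    rw [← hparF]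
    exact hoddTF
  -- counting: |Uo| + 2|Ue| ≤ |F|
  have hkey : Uo.card + 2 * Ue.card ≤ F.card := by
    rw [← hcount]
    have hdisj : Disjoint Uo Ue := by
      rw [Finset.disjoint_left]
      intro u hu hu'
      rw [hUo, Finset.mem_filter] at hu
      rw [hUe, Finset.mem_filter] at hu'
      exact hu'.2.1 hu.2
    have hsub : Uo ∪ Ue ⊆ Out := Finset.union_subset (Finset.filter_subset _ _)
      (Finset.filter_subset _ _)
    calc Uo.card + 2 * Ue.card ≤ ∑ u ∈ Uo, d u + ∑ u ∈ Ue, d u := by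
          gcongr
          · calc Uo.card = ∑ _u ∈ Uo, 1 := by simp
              _ ≤ ∑ u ∈ Uo, d u := by
                apply Finset.sum_le_sum
                intro u hu
                rw [hUo, Finset.mem_filter] at hu
                exact hu.2.pos
          · calc 2 * Ue.card = ∑ _u ∈ Ue, 2 := by simp [mul_comm]
              _ ≤ ∑ u ∈ Ue, d u := by
                apply Finset.sum_le_sum
                intro u hu
                rw [hUe, Finset.mem_filter] at hu
                have h1 := hu.2.1
                have h2 := hu.2.2
                rw [Nat.not_odd_iff_even] at h1
                obtain ⟨k, hk⟩ := h1
                omega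
      _ = ∑ u ∈ Uo ∪ Ue, d u := (Finset.sum_union hdisj).symm
      _ ≤ ∑ u ∈ Out, d u := Finset.sum_le_sum_of_subset hsub
  -- coverage
  set A : Finset (Sym2 V) := G.edgeFinset.filter (fun e => ∀ v ∈ e, v ∈ S) with hA
  set C : Finset (Sym2 V) := Ue.biUnion (fun u => G.incidenceFinset u) with hC
  have hCedge : ∀ e ∈ C, e ∈ G.edgeFinset := by
    intro e he
    rw [hC, Finset.mem_biUnion] at he
    obtain ⟨u, _, he⟩ := he
    rw [SimpleGraph.mem_incidenceFinset] at he
    rw [SimpleGraph.mem_edgeFinset]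
    exact he.1
  have hcover : (G.edgeFinset.filter (fun e => ∀ v ∈ e, v ∈ T)) ∪ F ⊆ A ∪ C := by
    intro e he
    rw [Finset.mem_union] at he
    rcases he with he | he
    · rw [Finset.mem_filter] at he
      apply Finset.mem_union_left
      rw [hA, Finset.mem_filter]
      exact ⟨he.1, fun v hv => Finset.mem_union_left _ (he.2 v hv)⟩
    · obtain ⟨a, b, haT, hbT, rfl⟩ := hFe e he
      have heE : s(a, b) ∈ G.edgeFinset := (Finset.mem_filter.mp (hF he)).1
      have hdb : d b ≠ 0 :=
        Finset.card_ne_zero_of_mem (Finset.mem_filter.mpr ⟨he, Sym2.mem_mk_right a b⟩)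
      by_cases hob : Odd (d b)
      · apply Finset.mem_union_left
        rw [hA, Finset.mem_filter]
        refine ⟨heE, ?_⟩
        intro v hv
        rw [Sym2.mem_iff] at hv
        rcases hv with rfl | rfl
        · exact Finset.mem_union_left _ haT
        · refine Finset.mem_union_right _ ?_
          rw [hUo, Finset.mem_filter, hOut, Finset.mem_filter]
          exact ⟨⟨Finset.mem_univ _, hbT⟩, hob⟩
      · apply Finset.mem_union_right
        rw [hC, Finset.mem_biUnion]
        refine ⟨b, ?_, ?_⟩
        · rw [hUe, Finset.mem_filter, hOut, Finset.mem_filter]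
          exact ⟨⟨Finset.mem_univ _, hbT⟩, hob, hdb⟩
        · rw [SimpleGraph.mem_incidenceFinset]
          exact ⟨SimpleGraph.mem_edgeFinset.mp heE, Sym2.mem_mk_right a b⟩
  -- put it together
  have step1 : ∑ e ∈ (G.edgeFinset.filter (fun e => ∀ v ∈ e, v ∈ T)) ∪ F, z e
      ≤ ∑ e ∈ A ∪ C, z e := by
    apply Finset.sum_le_sum_of_subset_of_nonneg hcover
    intro e he _
    apply hnonneg
    rw [Finset.mem_union] at he
    rcases he with he | he
    · exact Finset.filter_subset _ _ he
    · exact hCedge e he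
  have step2 : ∑ e ∈ A ∪ C, z e ≤ ∑ e ∈ A, z e + ∑ e ∈ C, z e :=
    aux_union_sum_le A C z (fun e he => hnonneg e (hCedge e he))
  have step3 : ∑ e ∈ A, z e ≤ ((S.card : ℝ) - 1) / 2 := hodd S hSodd
  have step4 : ∑ e ∈ C, z e ≤ (Ue.card : ℝ) := by
    rw [hC]
    refine le_trans (aux_biUnion_sum_le Ue (fun u => G.incidenceFinset u) z (fun e he => hnonneg e (hCedge e he))) ?_
    calc ∑ u ∈ Ue, ∑ e ∈ G.incidenceFinset u, z e ≤ ∑ _u ∈ Ue, (1 : ℝ) :=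
          Finset.sum_le_sum (fun u _ => hdeg u)
      _ = (Ue.card : ℝ) := by simp
  have hfin : ((S.card : ℝ) - 1) / 2 + (Ue.card : ℝ)
      ≤ (((T.card : ℝ) + (F.card : ℝ)) - 1) / 2 := by
    rw [hScard]
    have h1 : (Uo.card : ℝ) + 2 * (Ue.card : ℝ) ≤ (F.card : ℝ) := by
      exact_mod_cast hkey
    push_cast
    linarith
  linarith
end
end
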